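/- arXiv:1706.05213 — 6 statements merged into one kernel-verified Lean document; each statement's English description precedes it below -/
import Mathlib

section
/- Let μ, ν > 0. Let W be a random variable with distribution function Ψ_{k−1}(t) = P(W < t), let α be exponentially distributed with rate μ and β exponentially distributed with rate ν, with W, α, β mutually independent. Define Y = max(0, W + β) − max(α, W) and Ψ_k(t) = P(Y < t). Then Ψ_k(t) = μν·e^{μt}·∫₀^∞∫₀^∞ Ψ_{k−1}(u − v)·e^{−μu−νv} du dv for t ≤ 0, and Ψ_k(t) = μν·e^{−νt}·∫₀^∞∫₀^∞ Ψ_{k−1}(u − v)·e^{−μu−νv} du dv + 1 − e^{−νt} for t > 0. -/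
open MeasureTheory ProbabilityTheory Set Real Function
open scoped ENNReal

lemma integral_exp_neg_mul_Ioi {r : ℝ} (hr : 0 < r) (s : ℝ) :
    ∫ x in Ioi s, Real.exp (-(r*x)) = Real.exp (-(r*s)) / r := by
  have h := integral_comp_mul_left_Ioi (fun x => Real.exp (-x)) s hr
  simp only [smul_eq_mul] at h
  calc ∫ x in Ioi s, Real.exp (-(r*x)) = r⁻¹ * ∫ x in Ioi (r*s), Real.exp (-x) := h
    _ = Real.exp (-(r*s)) / r := by rw [integral_exp_neg_Ioi]; ring

lemma integrableOn_exp_neg_mul_Ioi {r : ℝ} (hr : 0 < r) (s : ℝ) :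
    IntegrableOn (fun x => Real.exp (-(r*x))) (Ioi s) := by
  simpa [neg_mul] using exp_neg_integrableOn_Ioi s hr

lemma lintegral_exp_neg_mul_Ioi {r : ℝ} (hr : 0 < r) (s : ℝ) :
    ∫⁻ x in Ioi s, ENNReal.ofReal (Real.exp (-(r*x))) = ENNReal.ofReal (Real.exp (-(r*s)) / r) := by
  rw [← integral_exp_neg_mul_Ioi hr s,
    ← ofReal_integral_eq_lintegral_ofReal (integrableOn_exp_neg_mul_Ioi hr s)]
  exact Filter.Eventually.of_forall fun x => (Real.exp_pos _).le

noncomputable def expM (r : ℝ) : Measure ℝ :=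
  volume.withDensity ((Ioi (0:ℝ)).indicator fun a => ENNReal.ofReal (r * Real.exp (-(r*a))))

lemma expM_apply {r : ℝ} (s : Set ℝ) (hs : MeasurableSet s) :
    expM r s = ∫⁻ a in s ∩ Ioi 0, ENNReal.ofReal (r * Real.exp (-(r*a))) := by
  rw [expM, withDensity_apply _ hs, ← lintegral_indicator hs]
  rw [← lintegral_indicator (hs.inter measurableSet_Ioi)]
  congr 1
  ext a
  by_cases h1 : a ∈ s <;> by_cases h2 : a ∈ Ioi (0:ℝ) <;>
    simp [Set.indicator_apply, h1, h2]

lemma lintegral_exp_neg_mul_mul_Ioi {r : ℝ} (hr : 0 < r) (s : ℝ) :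
    ∫⁻ a in Ioi s, ENNReal.ofReal (r * Real.exp (-(r*a))) = ENNReal.ofReal (Real.exp (-(r*s))) := by
  have h : ∀ a : ℝ, ENNReal.ofReal (r * Real.exp (-(r*a)))
      = ENNReal.ofReal r * ENNReal.ofReal (Real.exp (-(r*a))) := fun a =>
    ENNReal.ofReal_mul hr.le
  simp only [h]
  rw [lintegral_const_mul _ (by fun_prop), lintegral_exp_neg_mul_Ioi hr,
    ← ENNReal.ofReal_mul hr.le]
  congr 1
  field_simp

lemma expM_Ioi {r : ℝ} (hr : 0 < r) (s : ℝ) :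
    expM r (Ioi s) = ENNReal.ofReal (Real.exp (-(r * max 0 s))) := by
  rw [expM_apply _ measurableSet_Ioi]
  have h : Ioi s ∩ Ioi (0:ℝ) = Ioi (max 0 s) := by
    ext x; simp [and_comm, max_lt_iff]
  rw [h, lintegral_exp_neg_mul_mul_Ioi hr]

lemma one_le_exp_neg_mul {r t : ℝ} (hr : 0 < r) (ht : t ≤ 0) : 1 ≤ Real.exp (-(r*t)) :=
  Real.one_le_exp (by nlinarith)

lemma exp_neg_mul_le_one {r t : ℝ} (hr : 0 < r) (ht : 0 ≤ t) : Real.exp (-(r*t)) ≤ 1 := by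
  rw [show (1:ℝ) = Real.exp 0 by simp]
  exact Real.exp_le_exp.2 (by nlinarith)

lemma lintegral_exp_Ioo {r : ℝ} (hr : 0 < r) {t : ℝ} (ht : 0 < t) :
    ∫⁻ a in Ioo 0 t, ENNReal.ofReal (r * Real.exp (-(r*a)))
      = ENNReal.ofReal (1 - Real.exp (-(r*t))) := by
  have hint : ∫ a in Ioo (0:ℝ) t, r * Real.exp (-(r*a)) = 1 - Real.exp (-(r*t)) := by
    rw [← integral_Ioc_eq_integral_Ioo, ← intervalIntegral.integral_of_le ht.le]
    have h2 := intervalIntegral.integral_eq_sub_of_hasDerivAt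
      (f := fun a => -Real.exp (-(r*a))) (f' := fun a => r * Real.exp (-(r*a)))
      (a := 0) (b := t) (fun x _ => hasDerivAt_neg_exp_mul_exp)
      (Continuous.intervalIntegrable (by continuity) 0 t)
    rw [h2]; simp; ring
  rw [← hint, ← ofReal_integral_eq_lintegral_ofReal]
  · exact (((integrableOn_exp_neg_mul_Ioi hr 0).mono_set Ioo_subset_Ioi_self).const_mul r)
  · exact Filter.Eventually.of_forall fun x => by positivity

lemma expM_Iio {r : ℝ} (hr : 0 < r) (t : ℝ) :
    expM r (Iio t) = ENNReal.ofReal (max 0 (1 - Real.exp (-(r*t)))) := by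
  rw [expM_apply _ measurableSet_Iio]
  rcases le_or_gt t 0 with ht | ht
  · have h : Iio t ∩ Ioi (0:ℝ) = ∅ := by
      ext x; simp only [mem_inter_iff, mem_Iio, mem_Ioi, mem_empty_iff_false, iff_false]
      rintro ⟨h1, h2⟩; linarith
    rw [h]
    have : max 0 (1 - Real.exp (-(r*t))) = 0 :=
      max_eq_left (by linarith [one_le_exp_neg_mul hr ht])
    simp [this]
  · have hset : Iio t ∩ Ioi (0:ℝ) = Ioo 0 t := by ext x; simp [and_comm]
    rw [hset, lintegral_exp_Ioo hr ht]
    congr 1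
    exact (max_eq_right (by linarith [exp_neg_mul_le_one hr ht.le])).symm

lemma expM_Iic {r : ℝ} (hr : 0 < r) (t : ℝ) :
    expM r (Iic t) = ENNReal.ofReal (max 0 (1 - Real.exp (-(r*t)))) := by
  have h0 : expM r {t} = 0 := by
    rw [expM_apply _ (measurableSet_singleton t)]
    refine le_antisymm (le_trans (lintegral_mono_set (Set.inter_subset_left)) ?_) (by simp)
    rw [setLIntegral_measure_zero _ _ (measure_singleton t)]
  have h1 : expM r (Iic t) = expM r (Iio t) := by
    refine le_antisymm ?_ (measure_mono Iio_subset_Iic_self)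
    calc expM r (Iic t) = expM r (Iio t ∪ {t}) := by rw [Iio_union_right]
      _ ≤ expM r (Iio t) + expM r {t} := measure_union_le _ _
      _ = expM r (Iio t) := by rw [h0, add_zero]
  rw [h1, expM_Iio hr]

lemma ext_of_Iio (μ ν : Measure ℝ) [IsFiniteMeasure μ] [IsFiniteMeasure ν]
    (h : ∀ t, μ (Iio t) = ν (Iio t)) : μ = ν := by
  refine Measure.ext_of_Iic μ ν fun t => ?_
  have hIic : Iic t = ⋂ n : ℕ, Iio (t + ((n:ℝ)+1)⁻¹) := by
    ext x
    simp only [mem_Iic, mem_iInter, mem_Iio]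
    constructor
    · intro hx n
      have : (0:ℝ) < ((n:ℝ)+1)⁻¹ := by positivity
      linarith
    · intro hx
      by_contra hc
      push_neg at hc
      obtain ⟨n, hn⟩ := exists_nat_one_div_lt (show (0:ℝ) < x - t by linarith)
      have := hx n
      rw [one_div] at hn
      linarith
  have key : ∀ (ρ : Measure ℝ), IsFiniteMeasure ρ →
      ρ (Iic t) = ⨅ n : ℕ, ρ (Iio (t + ((n:ℝ)+1)⁻¹)) := by
    intro ρ hρ
    rw [hIic]
    refine Directed.measure_iInter (fun n => measurableSet_Iio.nullMeasurableSet) ?_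
      ⟨0, measure_ne_top _ _⟩
    intro m n
    have h1 : ∀ k l : ℕ, k ≤ l → Iio (t + ((l:ℝ)+1)⁻¹) ⊆ Iio (t + ((k:ℝ)+1)⁻¹) := by
      intro k l hkl
      refine Iio_subset_Iio ?_
      have : ((k:ℝ)+1)⁻¹ ≥ ((l:ℝ)+1)⁻¹ := by
        apply inv_anti₀ (by positivity)
        exact_mod_cast Nat.succ_le_succ hkl
      linarith
    exact ⟨max m n, h1 m _ (le_max_left m n), h1 n _ (le_max_right m n)⟩
  rw [key μ ‹_›, key ν ‹_›]
  exact iInf_congr fun n => h _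

lemma expM_univ {r : ℝ} (hr : 0 < r) : expM r univ = 1 := by
  rw [expM_apply _ MeasurableSet.univ, Set.univ_inter, lintegral_exp_neg_mul_mul_Ioi hr]
  simp

instance expM_finite {r : ℝ} : IsFiniteMeasure (expM r) := by
  rcases le_or_gt r 0 with hr | hr
  · constructor
    rw [expM_apply _ MeasurableSet.univ, Set.univ_inter]
    have h : ∀ a : ℝ, ENNReal.ofReal (r * Real.exp (-(r*a))) = 0 := fun a =>
      ENNReal.ofReal_eq_zero.2 (mul_nonpos_of_nonpos_of_nonneg hr (Real.exp_pos _).le)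
    simp only [h, lintegral_zero]
    exact ENNReal.zero_lt_top
  · exact ⟨by rw [expM_univ hr]; exact ENNReal.one_lt_top⟩

lemma map_eq_expM {Ω : Type*} [MeasurableSpace Ω] (P : Measure Ω) [IsProbabilityMeasure P]
    {r : ℝ} (hr : 0 < r) {X : Ω → ℝ} (hmX : Measurable X)
    (hX : ∀ t, (P {ω | X ω < t}).toReal = max 0 (1 - Real.exp (-r*t))) :
    P.map X = expM r := by
  have : IsProbabilityMeasure (P.map X) := Measure.isProbabilityMeasure_map hmX.aemeasurable
  refine ext_of_Iio _ _ fun t => ?_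
  rw [Measure.map_apply hmX measurableSet_Iio, expM_Iio hr]
  have h1 : P (X ⁻¹' Iio t) = P {ω | X ω < t} := rfl
  rw [h1, ← ENNReal.ofReal_toReal (measure_ne_top P _), hX t, neg_mul]

lemma swap3 (PW : Measure ℝ) [SFinite PW] (f : ℝ → ℝ → ℝ → ℝ≥0∞)
    (hf : Measurable (fun p : ℝ × ℝ × ℝ => f p.1 p.2.1 p.2.2)) :
    ∫⁻ u in Ioi (0:ℝ), ∫⁻ v in Ioi (0:ℝ), ∫⁻ w, f u v w ∂PW
      = ∫⁻ w, (∫⁻ v in Ioi (0:ℝ), ∫⁻ u in Ioi (0:ℝ), f u v w) ∂PW := by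
  set V := volume.restrict (Ioi (0:ℝ)) with hV
  have h1 : ∀ u, Measurable (fun p : ℝ × ℝ => f u p.1 p.2) := fun u =>
    hf.comp (measurable_const.prodMk measurable_id)
  have step1 : ∀ u, ∫⁻ v, ∫⁻ w, f u v w ∂PW ∂V = ∫⁻ w, ∫⁻ v, f u v w ∂V ∂PW := fun u =>
    lintegral_lintegral_swap (h1 u).aemeasurable
  simp_rw [step1]
  have h2 : Measurable (fun q : (ℝ × ℝ) => ∫⁻ v, f q.1 v q.2 ∂V) := by
    apply Measurable.lintegral_prod_right' (f := fun q : (ℝ × ℝ) × ℝ => f q.1.1 q.2 q.1.2)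
    exact hf.comp ((measurable_fst.comp measurable_fst).prodMk
      (measurable_snd.prodMk (measurable_snd.comp measurable_fst)))
  have step2 : ∫⁻ u, ∫⁻ w, (fun u w => ∫⁻ v, f u v w ∂V) u w ∂PW ∂V
      = ∫⁻ w, ∫⁻ u, ∫⁻ v, f u v w ∂V ∂V ∂PW :=
    lintegral_lintegral_swap h2.aemeasurable
  rw [step2]
  refine lintegral_congr fun w => ?_
  have h3 : Measurable (fun p : ℝ × ℝ => f p.1 p.2 w) :=
    hf.comp (measurable_fst.prodMk (measurable_snd.prodMk measurable_const))
  exact lintegral_lintegral_swap h3.aemeasurable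

noncomputable def Kf (m n : ℝ) (w : ℝ) : ℝ≥0∞ :=
  ∫⁻ v in Ioi (0:ℝ), ENNReal.ofReal (n * Real.exp (-(n*v)) * Real.exp (-(m * max 0 (w+v))))

lemma Kf_meas (m n : ℝ) : Measurable (Kf m n) := by
  apply Measurable.lintegral_prod_right'
    (f := fun p : ℝ × ℝ => ENNReal.ofReal (n * Real.exp (-(n*p.2)) * Real.exp (-(m * max 0 (p.1+p.2)))))
  fun_prop

lemma Kf_le_one {m n : ℝ} (hm : 0 < m) (hn : 0 < n) (w : ℝ) : Kf m n w ≤ 1 := by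
  have h : Kf m n w ≤ ∫⁻ v in Ioi (0:ℝ), ENNReal.ofReal (n * Real.exp (-(n*v))) := by
    refine lintegral_mono fun v => ENNReal.ofReal_le_ofReal ?_
    have h1 : Real.exp (-(m * max 0 (w+v))) ≤ 1 :=
      exp_neg_mul_le_one hm (le_max_left 0 (w+v))
    have h2 : 0 ≤ n * Real.exp (-(n*v)) := by positivity
    nlinarith [Real.exp_pos (-(m * max 0 (w+v)))]
  calc Kf m n w ≤ _ := h
    _ = ENNReal.ofReal (Real.exp (-(n*0))) := lintegral_exp_neg_mul_mul_Ioi hn 0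
    _ ≤ 1 := by simp

lemma lintegral_Kf_ne_top (PW : Measure ℝ) [IsProbabilityMeasure PW] {m n : ℝ}
    (hm : 0 < m) (hn : 0 < n) : ∫⁻ w, Kf m n w ∂PW ≠ ⊤ := by
  refine ne_top_of_le_ne_top (b := 1) ENNReal.one_ne_top ?_
  calc ∫⁻ w, Kf m n w ∂PW ≤ ∫⁻ _, 1 ∂PW := lintegral_mono fun w => Kf_le_one hm hn w
    _ = 1 := by simp

lemma exp_split (m n u v : ℝ) :
    Real.exp (-m*u - n*v) = Real.exp (-(m*u)) * Real.exp (-(n*v)) := by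
  rw [← Real.exp_add]; congr 1; ring

lemma big3 (PW : Measure ℝ) [IsProbabilityMeasure PW] {m n : ℝ} (hm : 0 < m) (hn : 0 < n)
    (Ψ : ℝ → ℝ) (hΨ : ∀ x, Ψ x = (PW (Iio x)).toReal) :
    ∫ u in Ioi (0:ℝ), ∫ v in Ioi (0:ℝ), Ψ (u - v) * Real.exp (-m*u - n*v)
      = (∫⁻ w, Kf m n w ∂PW).toReal / (m*n) := by
  have hΨ0 : ∀ x, 0 ≤ Ψ x := fun x => (hΨ x) ▸ ENNReal.toReal_nonneg
  have hΨ1 : ∀ x, Ψ x ≤ 1 := by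
    intro x
    rw [hΨ x]
    calc (PW (Iio x)).toReal ≤ (1 : ℝ≥0∞).toReal :=
      ENNReal.toReal_mono ENNReal.one_ne_top prob_le_one
      _ = 1 := by simp
  have hΨmono : Monotone Ψ := fun x y hxy => by
    rw [hΨ x, hΨ y]
    exact ENNReal.toReal_mono (measure_ne_top _ _) (measure_mono (Iio_subset_Iio hxy))
  have hΨm : Measurable Ψ := hΨmono.measurable
  -- inner integrand measurable on the product
  have hFm : Measurable (fun p : ℝ × ℝ => ENNReal.ofReal (Ψ (p.1 - p.2) * Real.exp (-m*p.1 - n*p.2))) := by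
    apply Measurable.ennreal_ofReal
    exact (hΨm.comp (measurable_fst.sub measurable_snd)).mul (by fun_prop)
  set g : ℝ → ℝ≥0∞ := fun u => ∫⁻ v in Ioi (0:ℝ), ENNReal.ofReal (Ψ (u - v) * Real.exp (-m*u - n*v)) with hg
  have hgm : Measurable g := Measurable.lintegral_prod_right' hFm
  have hA : ∀ u, ∫ v in Ioi (0:ℝ), Ψ (u-v) * Real.exp (-m*u - n*v) = (g u).toReal := by
    intro u
    rw [hg]
    refine integral_eq_lintegral_of_nonneg_ae
      (Filter.Eventually.of_forall fun v => mul_nonneg (hΨ0 _) (Real.exp_pos _).le) ?_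
    exact ((hΨm.comp (measurable_const.sub measurable_id)).mul (by fun_prop)).aestronglyMeasurable
  have hC : ∀ u, g u < ⊤ := by
    intro u
    have hb : g u ≤ ∫⁻ v in Ioi (0:ℝ), ENNReal.ofReal (Real.exp (-(m*u))) * ENNReal.ofReal (Real.exp (-(n*v))) := by
      refine lintegral_mono fun v => ?_
      rw [← ENNReal.ofReal_mul (Real.exp_pos _).le]
      refine ENNReal.ofReal_le_ofReal ?_
      rw [exp_split]
      exact mul_le_of_le_one_left (by positivity) (hΨ1 (u-v))
    refine lt_of_le_of_lt hb ?_
    rw [lintegral_const_mul _ (by fun_prop), lintegral_exp_neg_mul_Ioi hn]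
    exact ENNReal.mul_lt_top ENNReal.ofReal_lt_top ENNReal.ofReal_lt_top
  have hD : ∫ u in Ioi (0:ℝ), (g u).toReal = (∫⁻ u in Ioi (0:ℝ), g u).toReal :=
    integral_toReal hgm.aemeasurable (Filter.Eventually.of_forall hC)
  -- core identity
  set f3 : ℝ → ℝ → ℝ → ℝ≥0∞ := fun u v w =>
    (if w + v < u then 1 else 0) * ENNReal.ofReal (Real.exp (-(m*u))) * ENNReal.ofReal (Real.exp (-(n*v))) with hf3
  have hf3m : Measurable (fun p : ℝ × ℝ × ℝ => f3 p.1 p.2.1 p.2.2) := by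
    rw [hf3]
    refine Measurable.mul (Measurable.mul ?_ (by fun_prop)) (by fun_prop)
    refine Measurable.ite ?_ measurable_const measurable_const
    exact measurableSet_lt ((measurable_snd.comp measurable_snd).add (measurable_fst.comp measurable_snd)) measurable_fst
  have hpt : ∀ u v : ℝ, ENNReal.ofReal (Ψ (u - v) * Real.exp (-m*u - n*v)) = ∫⁻ w, f3 u v w ∂PW := by
    intro u v
    have hind : (fun w => f3 u v w) = (Iio (u - v)).indicator
        (fun _ => ENNReal.ofReal (Real.exp (-(m*u))) * ENNReal.ofReal (Real.exp (-(n*v)))) := by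
      funext w
      have hiff : w + v < u ↔ w ∈ Iio (u - v) := by rw [mem_Iio, lt_sub_iff_add_lt]
      by_cases hw : w + v < u
      · rw [hf3]; simp only [if_pos hw, Set.indicator_of_mem (hiff.1 hw)]; ring
      · rw [hf3]; simp [if_neg hw, Set.indicator_of_notMem (fun hmem => hw (hiff.2 hmem))]
    rw [hind, lintegral_indicator_const measurableSet_Iio]
    rw [hΨ (u - v), ENNReal.ofReal_mul ENNReal.toReal_nonneg,
      ENNReal.ofReal_toReal (measure_ne_top _ _), exp_split,
      ENNReal.ofReal_mul (Real.exp_pos _).le]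
    ring
  have hcore : ENNReal.ofReal (m*n) * ∫⁻ u in Ioi (0:ℝ), g u = ∫⁻ w, Kf m n w ∂PW := by
    have hswap : ∫⁻ u in Ioi (0:ℝ), g u
        = ∫⁻ w, (∫⁻ v in Ioi (0:ℝ), ∫⁻ u in Ioi (0:ℝ), f3 u v w) ∂PW := by
      rw [hg]
      simp only [hpt]
      exact swap3 PW f3 hf3m
    rw [hswap]
    -- inner u integral
    have hinnu : ∀ v w : ℝ, ∫⁻ u in Ioi (0:ℝ), f3 u v w
        = ENNReal.ofReal (Real.exp (-(m * max 0 (w+v))) / m) * ENNReal.ofReal (Real.exp (-(n*v))) := by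
      intro v w
      have hind : (fun u => f3 u v w) = (Ioi (w + v)).indicator
          (fun u => ENNReal.ofReal (Real.exp (-(m*u))) * ENNReal.ofReal (Real.exp (-(n*v)))) := by
        funext u
        by_cases hu : w + v < u
        · rw [hf3]; simp only [if_pos hu, Set.indicator_of_mem (mem_Ioi.2 hu)]; ring
        · rw [hf3]; simp [if_neg hu, Set.indicator_of_notMem (fun hmem => hu (mem_Ioi.1 hmem))]
      rw [hind, lintegral_indicator measurableSet_Ioi, Measure.restrict_restrict measurableSet_Ioi,
        Ioi_inter_Ioi, sup_comm, lintegral_mul_const _ (by fun_prop),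
        lintegral_exp_neg_mul_Ioi hm]
    simp only [hinnu]
    rw [← lintegral_const_mul _ (by
      apply Measurable.lintegral_prod_right' (f := fun p : ℝ × ℝ =>
        ENNReal.ofReal (Real.exp (-(m * max 0 (p.1+p.2))) / m) * ENNReal.ofReal (Real.exp (-(n*p.2))))
      fun_prop)]
    refine lintegral_congr fun w => ?_
    rw [Kf, ← lintegral_const_mul _ (by fun_prop)]
    refine lintegral_congr fun v => ?_
    have e1 : (0:ℝ) ≤ Real.exp (-(m * max 0 (w + v))) / m := by positivity
    have e2 : (0:ℝ) ≤ m * n := by positivity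
    rw [← ENNReal.ofReal_mul e1, ← ENNReal.ofReal_mul e2]
    congr 1
    field_simp
  -- finish
  calc ∫ u in Ioi (0:ℝ), ∫ v in Ioi (0:ℝ), Ψ (u - v) * Real.exp (-m*u - n*v)
      = ∫ u in Ioi (0:ℝ), (g u).toReal := by
        refine integral_congr_ae (Filter.Eventually.of_forall fun u => ?_)
        exact hA u
    _ = (∫⁻ u in Ioi (0:ℝ), g u).toReal := hD
    _ = (∫⁻ w, Kf m n w ∂PW).toReal / (m*n) := by
        rw [← hcore, ENNReal.toReal_mul, ENNReal.toReal_ofReal (by positivity)]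
        field_simp

lemma Pa_inner {m : ℝ} (hm : 0 < m) (c w : ℝ) :
    expM m {a | c < max a w} = if c < w then 1 else ENNReal.ofReal (Real.exp (-(m * max 0 c))) := by
  by_cases h : c < w
  · have hset : {a : ℝ | c < max a w} = univ := by
      ext a; simp only [mem_setOf_eq, mem_univ, iff_true, lt_max_iff]; right; exact h
    rw [hset, if_pos h, expM_univ hm]
  · have hset : {a : ℝ | c < max a w} = Ioi c := by
      ext a; simp only [mem_setOf_eq, mem_Ioi, lt_max_iff]
      constructor
      · rintro (h1 | h1); exacts [h1, absurd h1 h]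
      · exact fun h1 => Or.inl h1
    rw [hset, if_neg h, expM_Ioi hm]

lemma lintegral_expM {r : ℝ} (hr : 0 < r) {g : ℝ → ℝ≥0∞} (hg : Measurable g) :
    ∫⁻ a, g a ∂(expM r) = ∫⁻ a in Ioi (0:ℝ), ENNReal.ofReal (r * Real.exp (-(r*a))) * g a := by
  rw [expM, lintegral_withDensity_eq_lintegral_mul _ ((by fun_prop : Measurable fun a : ℝ =>
    ENNReal.ofReal (r * Real.exp (-(r*a)))).indicator measurableSet_Ioi) hg]
  rw [← lintegral_indicator measurableSet_Ioi]
  refine lintegral_congr fun a => ?_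
  by_cases ha : a ∈ Ioi (0:ℝ) <;>
    simp [Set.indicator_apply, ha]

lemma hSmeas (t : ℝ) : MeasurableSet {p : ℝ × ℝ × ℝ | max 0 (p.1 + p.2.1) - max p.2.2 p.1 < t} := by
  apply measurableSet_lt _ measurable_const
  fun_prop

lemma hQmeas (t w : ℝ) : MeasurableSet {q : ℝ × ℝ | max 0 (w + q.1) - max q.2 w < t} := by
  apply measurableSet_lt _ measurable_const
  fun_prop

lemma pair_inner {m n : ℝ} (hm : 0 < m) (hn : 0 < n) (t w : ℝ) :
    ((expM n).prod (expM m)) {q : ℝ × ℝ | max 0 (w + q.1) - max q.2 w < t}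
      = ∫⁻ b in Ioi (0:ℝ), ENNReal.ofReal (n * Real.exp (-(n*b))) *
          (if max 0 (w+b) - t < w then 1
            else ENNReal.ofReal (Real.exp (-(m * max 0 (max 0 (w+b) - t))))) := by
  rw [Measure.prod_apply (hQmeas t w)]
  have hpre : ∀ b : ℝ, (Prod.mk b ⁻¹' {q : ℝ × ℝ | max 0 (w + q.1) - max q.2 w < t})
      = {a : ℝ | max 0 (w+b) - t < max a w} := by
    intro b; ext a
    simp only [mem_preimage, mem_setOf_eq]
    constructor <;> intro h <;> linarith
  have hinner : ∀ b : ℝ, expM m (Prod.mk b ⁻¹' {q : ℝ × ℝ | max 0 (w + q.1) - max q.2 w < t})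
      = (if max 0 (w+b) - t < w then 1
          else ENNReal.ofReal (Real.exp (-(m * max 0 (max 0 (w+b) - t))))) := by
    intro b
    rw [hpre b, Pa_inner hm]
  simp only [hinner]
  refine lintegral_expM hn ?_
  refine Measurable.ite ?_ measurable_const (by fun_prop)
  exact measurableSet_lt (by fun_prop) measurable_const

lemma trip (PW : Measure ℝ) [SFinite PW] (m n t : ℝ) :
    (PW.prod ((expM n).prod (expM m))) {p : ℝ × ℝ × ℝ | max 0 (p.1 + p.2.1) - max p.2.2 p.1 < t}
      = ∫⁻ w, ((expM n).prod (expM m)) {q : ℝ × ℝ | max 0 (w + q.1) - max q.2 w < t} ∂PW := by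
  rw [Measure.prod_apply (hSmeas t)]
  rfl

lemma big1 (PW : Measure ℝ) [SFinite PW] {m n : ℝ} (hm : 0 < m) (hn : 0 < n)
    {t : ℝ} (ht : t ≤ 0) :
    (PW.prod ((expM n).prod (expM m))) {p : ℝ × ℝ × ℝ | max 0 (p.1 + p.2.1) - max p.2.2 p.1 < t}
      = ENNReal.ofReal (Real.exp (m*t)) * ∫⁻ w, Kf m n w ∂PW := by
  rw [trip PW m n t]
  have hinner : ∀ w : ℝ, ((expM n).prod (expM m)) {q : ℝ × ℝ | max 0 (w + q.1) - max q.2 w < t}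
      = ENNReal.ofReal (Real.exp (m*t)) * Kf m n w := by
    intro w
    rw [pair_inner hm hn t w, Kf, ← lintegral_const_mul _ (by fun_prop)]
    refine setLIntegral_congr_fun measurableSet_Ioi (fun b hb => ?_)
    rw [mem_Ioi] at hb
    have hc1 : ¬ (max 0 (w+b) - t < w) := by
      have := le_max_right 0 (w+b)
      push_neg
      linarith
    have hc2 : max 0 (max 0 (w+b) - t) = max 0 (w+b) - t := by
      have := le_max_left 0 (w+b)
      exact max_eq_right (by linarith)
    rw [if_neg hc1, hc2]
    have hc3 : Real.exp (-(m * (max 0 (w+b) - t))) = Real.exp (m*t) * Real.exp (-(m * max 0 (w+b))) := by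
      rw [← Real.exp_add]; congr 1; ring
    rw [hc3, ENNReal.ofReal_mul (Real.exp_pos _).le,
      ENNReal.ofReal_mul (by positivity : (0:ℝ) ≤ n * Real.exp (-(n*b)))]
    ring
  simp only [hinner]
  rw [lintegral_const_mul _ (Kf_meas m n)]

lemma big2 (PW : Measure ℝ) [IsProbabilityMeasure PW] {m n : ℝ} (hm : 0 < m) (hn : 0 < n)
    {t : ℝ} (ht : 0 < t) :
    (PW.prod ((expM n).prod (expM m))) {p : ℝ × ℝ × ℝ | max 0 (p.1 + p.2.1) - max p.2.2 p.1 < t}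
      = ENNReal.ofReal (1 - Real.exp (-(n*t)))
        + ENNReal.ofReal (Real.exp (-(n*t))) * ∫⁻ w, Kf m n w ∂PW := by
  rw [trip PW m n t]
  have hinner : ∀ w : ℝ, ((expM n).prod (expM m)) {q : ℝ × ℝ | max 0 (w + q.1) - max q.2 w < t}
      = ENNReal.ofReal (1 - Real.exp (-(n*t))) + ENNReal.ofReal (Real.exp (-(n*t))) * Kf m n w := by
    intro w
    rw [pair_inner hm hn t w]
    -- replace integrand by the cleaner form
    have hfg : ∀ b : ℝ, (if max 0 (w+b) - t < w then 1
          else ENNReal.ofReal (Real.exp (-(m * max 0 (max 0 (w+b) - t)))))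
        = (if b < t then 1 else ENNReal.ofReal (Real.exp (-(m * max 0 (w + b - t))))) := by
      intro b
      rcases lt_or_ge b t with hbt | hbt
      · rw [if_pos hbt]
        rcases le_or_gt (w + b) 0 with hwb | hwb
        · have h1 : max 0 (w+b) = 0 := max_eq_left hwb
          have h2 : max 0 (0 - t) = 0 := max_eq_left (by linarith)
          by_cases h3 : max 0 (w+b) - t < w
          · rw [if_pos h3]
          · rw [if_neg h3, h1, h2]
            simp
        · have h1 : max 0 (w+b) = w + b := max_eq_right hwb.le
          have h3 : max 0 (w+b) - t < w := by rw [h1]; linarith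
          rw [if_pos h3]
      · rw [if_neg (not_lt.2 hbt)]
        rcases le_or_gt (w + b) 0 with hwb | hwb
        · have h1 : max 0 (w+b) = 0 := max_eq_left hwb
          have h2 : max 0 (0 - t) = 0 := max_eq_left (by linarith)
          have h4 : max 0 (w + b - t) = 0 := max_eq_left (by linarith)
          by_cases h3 : max 0 (w+b) - t < w
          · rw [if_pos h3, h4]; simp
          · rw [if_neg h3, h1, h2, h4]
        · have h1 : max 0 (w+b) = w + b := max_eq_right hwb.le
          have h3 : ¬ (max 0 (w+b) - t < w) := by rw [h1]; push_neg; linarith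
          rw [if_neg h3, h1]
    simp only [hfg]
    -- split the domain
    have hsplit : Ioi (0:ℝ) = Ioo 0 t ∪ Ici t := by
      ext x; simp only [mem_Ioi, mem_union, mem_Ioo, mem_Ici]
      constructor
      · intro hx; rcases lt_or_ge x t with h | h
        · exact Or.inl ⟨hx, h⟩
        · exact Or.inr h
      · rintro (⟨h1, _⟩ | h1); exacts [h1, lt_of_lt_of_le ht h1]
    have hdisj : Disjoint (Ioo (0:ℝ) t) (Ici t) := by
      rw [Set.disjoint_left]
      rintro x ⟨_, h2⟩ h3
      exact absurd h3 (not_le.2 h2)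
    rw [hsplit, lintegral_union measurableSet_Ici hdisj]
    -- part 1
    have hpart1 : ∫⁻ b in Ioo (0:ℝ) t, ENNReal.ofReal (n * Real.exp (-(n*b))) *
        (if b < t then 1 else ENNReal.ofReal (Real.exp (-(m * max 0 (w + b - t)))))
        = ENNReal.ofReal (1 - Real.exp (-(n*t))) := by
      rw [← lintegral_exp_Ioo hn ht]
      refine setLIntegral_congr_fun measurableSet_Ioo (fun b hb => ?_)
      rw [if_pos hb.2, mul_one]
    -- part 2
    have hpart2 : ∫⁻ b in Ici t, ENNReal.ofReal (n * Real.exp (-(n*b))) *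
        (if b < t then 1 else ENNReal.ofReal (Real.exp (-(m * max 0 (w + b - t)))))
        = ENNReal.ofReal (Real.exp (-(n*t))) * Kf m n w := by
      have hstep : ∫⁻ b in Ici t, ENNReal.ofReal (n * Real.exp (-(n*b))) *
          (if b < t then 1 else ENNReal.ofReal (Real.exp (-(m * max 0 (w + b - t)))))
          = ∫⁻ b in Ici t, ENNReal.ofReal (n * Real.exp (-(n*b))) *
            ENNReal.ofReal (Real.exp (-(m * max 0 (w + b - t)))) := by
        refine setLIntegral_congr_fun measurableSet_Ici (fun b hb => ?_)
        rw [mem_Ici] at hb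
        rw [if_neg (not_lt.2 hb)]
      rw [hstep]
      have hpre : (fun x : ℝ => x + t) ⁻¹' Ici t = Ici 0 := by
        ext x; simp only [mem_preimage, mem_Ici]; constructor <;> intro h <;> linarith
      have htrans := (measurePreserving_add_right volume t).setLIntegral_comp_preimage_emb
        (measurableEmbedding_addRight t)
        (fun b => ENNReal.ofReal (n * Real.exp (-(n*b))) *
          ENNReal.ofReal (Real.exp (-(m * max 0 (w + b - t))))) (Ici t)
      rw [← htrans, hpre]
      have hIciIoi : volume.restrict (Ici (0:ℝ)) = volume.restrict (Ioi (0:ℝ)) :=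
        (Measure.restrict_congr_set Ioi_ae_eq_Ici).symm
      rw [hIciIoi, Kf, ← lintegral_const_mul _ (by fun_prop)]
      refine setLIntegral_congr_fun measurableSet_Ioi (fun v hv => ?_)
      have e1 : w + (v + t) - t = w + v := by ring
      have e2 : Real.exp (-(n*(v+t))) = Real.exp (-(n*t)) * Real.exp (-(n*v)) := by
        rw [← Real.exp_add]; congr 1; ring
      rw [e1, e2]
      rw [show n * (Real.exp (-(n*t)) * Real.exp (-(n*v)))
          = Real.exp (-(n*t)) * (n * Real.exp (-(n*v))) from by ring,
        ENNReal.ofReal_mul (Real.exp_pos (-(n*t))).le,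
        ENNReal.ofReal_mul (by positivity : (0:ℝ) ≤ n * Real.exp (-(n*v)))]
      ring
    rw [hpart1, hpart2]
  simp only [hinner]
  rw [lintegral_add_left measurable_const, lintegral_const_mul _ (Kf_meas m n), lintegral_const,
    measure_univ, mul_one]

/-- One step of the recursion: if `W`, `α`, `β` are mutually independent,
`α`, `β` exponential with rates `μ`, `ν`, `Ψ_{k-1}(t) = P(W < t)`, and
`Y = max(0, W + β) - max(α, W)`, then the distribution function `Ψ_k(t) = P(Y < t)`
is given by the stated double-integral formulas. -/
theorem one_step_recursion {Ω : Type*} [MeasurableSpace Ω]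
    (P : Measure Ω) [IsProbabilityMeasure P]
    (μ ν : ℝ) (hμ : 0 < μ) (hν : 0 < ν)
    (W α β : Ω → ℝ) (hmW : Measurable W) (hmα : Measurable α) (hmβ : Measurable β)
    (hindep : iIndepFun (m := fun _ : Fin 3 => Real.measurableSpace) ![W, α, β] P)
    (hα : ∀ t : ℝ, (P {ω | α ω < t}).toReal = max 0 (1 - Real.exp (-μ*t)))
    (hβ : ∀ t : ℝ, (P {ω | β ω < t}).toReal = max 0 (1 - Real.exp (-ν*t)))
    (Ψprev : ℝ → ℝ) (hΨprev : ∀ t : ℝ, Ψprev t = (P {ω | W ω < t}).toReal)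
    (Y : Ω → ℝ) (hY : ∀ ω, Y ω = max 0 (W ω + β ω) - max (α ω) (W ω)) :
    ∀ t : ℝ,
      (t ≤ 0 → (P {ω | Y ω < t}).toReal =
        μ * ν * Real.exp (μ*t) *
          ∫ u in Set.Ioi (0:ℝ), ∫ v in Set.Ioi (0:ℝ), Ψprev (u - v) * Real.exp (-μ*u - ν*v)) ∧
      (0 < t → (P {ω | Y ω < t}).toReal =
        μ * ν * Real.exp (-ν*t) *
          (∫ u in Set.Ioi (0:ℝ), ∫ v in Set.Ioi (0:ℝ), Ψprev (u - v) * Real.exp (-μ*u - ν*v))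
          + 1 - Real.exp (-ν*t)) := by
  intro t
  have hPα : P.map α = expM μ := map_eq_expM P hμ hmα hα
  have hPβ : P.map β = expM ν := map_eq_expM P hν hmβ hβ
  set PW := P.map W with hPW
  have hPWprob : IsProbabilityMeasure PW := Measure.isProbabilityMeasure_map hmW.aemeasurable
  have hmFin : ∀ i, Measurable (![W, α, β] i) := by
    intro i; fin_cases i
    · exact hmW
    · exact hmα
    · exact hmβ
  have hβα : IndepFun (fun ω => (β ω, α ω)) W P := by
    have h := hindep.indepFun_prodMk hmFin 2 1 0 (by decide) (by decide)
    exact h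
  have hβαpair : IndepFun β α P := by
    have h := hindep.indepFun (show (2:Fin 3) ≠ 1 by decide)
    exact h
  have hpairlaw : P.map (fun ω => (β ω, α ω)) = (expM ν).prod (expM μ) := by
    rw [← hPβ, ← hPα]
    exact (indepFun_iff_map_prod_eq_prod_map_map hmβ.aemeasurable hmα.aemeasurable).1 hβαpair
  have hjoint : P.map (fun ω => (W ω, (β ω, α ω))) = PW.prod ((expM ν).prod (expM μ)) := by
    rw [← hpairlaw, hPW]
    exact (indepFun_iff_map_prod_eq_prod_map_map hmW.aemeasurable
      (hmβ.prodMk hmα).aemeasurable).1 hβα.symm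
  have hYev : {ω | Y ω < t} = (fun ω => (W ω, (β ω, α ω))) ⁻¹'
      {p : ℝ × ℝ × ℝ | max 0 (p.1 + p.2.1) - max p.2.2 p.1 < t} := by
    ext ω
    simp only [mem_setOf_eq, mem_preimage, hY ω]
  have hPY : P {ω | Y ω < t} = (PW.prod ((expM ν).prod (expM μ)))
      {p : ℝ × ℝ × ℝ | max 0 (p.1 + p.2.1) - max p.2.2 p.1 < t} := by
    rw [hYev, ← hjoint, Measure.map_apply (hmW.prodMk (hmβ.prodMk hmα)) (hSmeas t)]
  have hΨ' : ∀ x, Ψprev x = (PW (Iio x)).toReal := by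
    intro x
    rw [hΨprev x, hPW, Measure.map_apply hmW measurableSet_Iio]
    rfl
  have hRHS := big3 PW hμ hν Ψprev hΨ'
  set Λ := ∫⁻ w, Kf μ ν w ∂PW with hΛdef
  have hΛne : Λ ≠ ⊤ := lintegral_Kf_ne_top PW hμ hν
  constructor
  · intro ht
    rw [hPY, big1 PW hμ hν ht, hRHS, ENNReal.toReal_mul,
      ENNReal.toReal_ofReal (Real.exp_pos _).le]
    field_simp
    ring
  · intro ht
    rw [hPY, big2 PW hμ hν ht, hRHS]
    rw [ENNReal.toReal_add ENNReal.ofReal_ne_top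
      (ENNReal.mul_ne_top ENNReal.ofReal_ne_top hΛne), ENNReal.toReal_mul,
      ENNReal.toReal_ofReal (Real.exp_pos _).le,
      ENNReal.toReal_ofReal (by linarith [exp_neg_mul_le_one hν ht.le] : (0:ℝ) ≤ 1 - Real.exp (-(ν*t)))]
    rw [neg_mul]
    field_simp
    ring
end

section
/- Let μ, ν > 0 and define Ψ₁ : ℝ → ℝ by Ψ₁(t) = (ν/(μ+ν))·e^{μt} for t ≤ 0 and Ψ₁(t) = 1 − (μ/(μ+ν))·e^{−νt} for t > 0. Then μν·∫₀^∞∫₀^∞ Ψ₁(u − v)·e^{−μu−νv} du dv = ν²(3μ + ν)/(μ + ν)³. -/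
open MeasureTheory Real Set Filter Topology

private lemma hasDerivAt_exp_mul' (b x : ℝ) :
    HasDerivAt (fun y => Real.exp (b*y)) (b * Real.exp (b*x)) x := by
  have h := (Real.hasDerivAt_exp (b*x)).comp x ((hasDerivAt_id x).const_mul b)
  simpa [Function.comp_def, mul_comm] using h

private lemma exp_integral_Ioi (a : ℝ) {b : ℝ} (hb : 0 < b) :
    ∫ x in Set.Ioi a, Real.exp (-b*x) = Real.exp (-b*a)/b := by
  have hd : ∀ x ∈ Set.Ici a, HasDerivAt (fun y => -Real.exp (-b*y)/b) (Real.exp (-b*x)) x := by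
    intro x _
    have h := ((hasDerivAt_exp_mul' (-b) x).neg).div_const b
    refine h.congr_deriv ?_
    rw [div_eq_iff hb.ne']; ring
  have ht : Tendsto (fun y => -Real.exp (-b*y)/b) atTop (𝓝 0) := by
    have : Tendsto (fun y : ℝ => Real.exp (-b*y)) atTop (𝓝 0) :=
      Real.tendsto_exp_atBot.comp (tendsto_id.const_mul_atTop_of_neg (by linarith))
    simpa using (this.neg.div_const b)
  have := integral_Ioi_of_hasDerivAt_of_tendsto' hd (exp_neg_integrableOn_Ioi a hb) ht
  rw [this]; ring

private lemma mul_exp_deriv {b : ℝ} (hb : 0 < b) :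
    ∀ x ∈ Set.Ici (0:ℝ), HasDerivAt (fun y => -((y/b + 1/b^2) * Real.exp (-b*y)))
      (x * Real.exp (-b*x)) x := by
  intro x _
  have h1 : HasDerivAt (fun y : ℝ => y/b + 1/b^2) (1/b) x := by
    have h := ((hasDerivAt_id x).div_const b).add_const (1/b^2)
    simp only [one_div, id_eq] at h ⊢
    exact h
  have h := (h1.mul (hasDerivAt_exp_mul' (-b) x)).neg
  refine h.congr_deriv ?_
  field_simp
  ring

private lemma mul_exp_tendsto {b : ℝ} (hb : 0 < b) :
    Tendsto (fun y => -((y/b + 1/b^2) * Real.exp (-b*y))) atTop (𝓝 0) := by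
  have h0 : Tendsto (fun y : ℝ => Real.exp (-b*y)) atTop (𝓝 0) :=
    Real.tendsto_exp_atBot.comp (tendsto_id.const_mul_atTop_of_neg (by linarith))
  have h1 : Tendsto (fun y : ℝ => y * Real.exp (-b*y)) atTop (𝓝 0) := by
    have := tendsto_rpow_mul_exp_neg_mul_atTop_nhds_zero 1 b hb
    refine this.congr' ?_
    filter_upwards [eventually_gt_atTop (0:ℝ)] with y hy
    rw [Real.rpow_one]
  have : Tendsto (fun y : ℝ => (1/b) * (y * Real.exp (-b*y)) + (1/b^2) * Real.exp (-b*y))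
      atTop (𝓝 (1/b * 0 + 1/b^2 * 0)) := ((h1.const_mul _).add (h0.const_mul _))
  simp only [mul_zero, add_zero] at this
  refine (this.neg.congr (fun y => ?_)) |>.mono_right (by simp)
  ring

private lemma mul_exp_integrableOn {b : ℝ} (hb : 0 < b) :
    IntegrableOn (fun x : ℝ => x * Real.exp (-b*x)) (Set.Ioi 0) :=
  integrableOn_Ioi_deriv_of_nonneg' (mul_exp_deriv hb)
    (fun x hx => mul_nonneg (le_of_lt hx) (Real.exp_pos _).le) (mul_exp_tendsto hb)

private lemma mul_exp_integral {b : ℝ} (hb : 0 < b) :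
    ∫ x in Set.Ioi (0:ℝ), x * Real.exp (-b*x) = 1/b^2 := by
  have := integral_Ioi_of_hasDerivAt_of_nonneg' (mul_exp_deriv hb)
    (fun x hx => mul_nonneg (le_of_lt hx) (Real.exp_pos _).le) (mul_exp_tendsto hb)
  rw [this]
  simp

private lemma exp_interval (b u : ℝ) (hb : b ≠ 0) :
    ∫ v in (0:ℝ)..u, Real.exp (-b*v) = (1 - Real.exp (-b*u))/b := by
  have hd : ∀ x ∈ Set.uIcc (0:ℝ) u, HasDerivAt (fun y => -Real.exp (-b*y)/b)
      (Real.exp (-b*x)) x := by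
    intro x _
    have h := ((hasDerivAt_exp_mul' (-b) x).neg).div_const b
    refine h.congr_deriv ?_
    rw [div_eq_iff hb]; ring
  have hc : IntervalIntegrable (fun x => Real.exp (-b*x)) volume 0 u :=
    (Real.continuous_exp.comp (continuous_const.mul continuous_id)).intervalIntegrable 0 u
  rw [intervalIntegral.integral_eq_sub_of_hasDerivAt hd hc]
  field_simp
  rw [mul_zero, neg_zero, Real.exp_zero]; ring

/-- The double integral of `Ψ₁(u-v)·e^{-μu-νv}` over the positive quadrant,
scaled by `μν`, equals `ν²(3μ+ν)/(μ+ν)³`. -/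
theorem double_integral_psi_one (μ ν : ℝ) (hμ : 0 < μ) (hν : 0 < ν)
    (Ψ₁ : ℝ → ℝ)
    (hΨ₁ : ∀ t : ℝ, Ψ₁ t = if t ≤ 0 then ν/(μ+ν) * Real.exp (μ*t)
      else 1 - μ/(μ+ν) * Real.exp (-ν*t)) :
    μ * ν * ∫ u in Set.Ioi (0:ℝ), ∫ v in Set.Ioi (0:ℝ), Ψ₁ (u - v) * Real.exp (-μ*u - ν*v)
      = ν^2*(3*μ+ν)/(μ+ν)^3 := by
  have hs : 0 < μ + ν := by linarith
  set f : ℝ → ℝ := fun u => (1/ν) * Real.exp (-μ*u)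
    + (ν/(μ+ν)^2 - 1/ν) * Real.exp (-(μ+ν)*u)
    + (-(μ/(μ+ν))) * (u * Real.exp (-(μ+ν)*u)) with hf
  have hinner : ∀ u ∈ Set.Ioi (0:ℝ),
      (∫ v in Set.Ioi (0:ℝ), Ψ₁ (u - v) * Real.exp (-μ*u - ν*v)) = f u := by
    intro u hu
    have hu0 : 0 < u := hu
    set g1 : ℝ → ℝ := fun v => Real.exp (-μ*u) * Real.exp (-ν*v)
      - μ/(μ+ν) * Real.exp (-(μ+ν)*u) with hg1
    have hcongr1 : ∀ v ∈ Set.Ioc (0:ℝ) u, Ψ₁ (u - v) * Real.exp (-μ*u - ν*v) = g1 v := by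
      intro v hv
      rw [hΨ₁]
      rcases eq_or_lt_of_le hv.2 with h | h
      · subst h
        simp only [sub_self, le_refl, if_pos, mul_zero, Real.exp_zero, mul_one, hg1]
        rw [show -μ*v - ν*v = -μ*v + (-ν*v) by ring, Real.exp_add,
          show -(μ+ν)*v = -μ*v + (-ν*v) by ring, Real.exp_add]
        field_simp
        ring
      · rw [if_neg (not_le.mpr (by linarith))]
        simp only [hg1]
        rw [show -μ*u - ν*v = -μ*u + (-ν*v) by ring, Real.exp_add,
          show -ν*(u-v) = -ν*u + ν*v by ring, Real.exp_add,
          show -(μ+ν)*u = -μ*u + (-ν*u) by ring, Real.exp_add]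
        have : Real.exp (ν*v) * Real.exp (-ν*v) = 1 := by
          rw [← Real.exp_add]; simp
        linear_combination (-(μ/(μ+ν)) * Real.exp (-μ*u) * Real.exp (-ν*u)) * this
    have hcongr2 : ∀ v ∈ Set.Ioi u, Ψ₁ (u - v) * Real.exp (-μ*u - ν*v)
        = ν/(μ+ν) * Real.exp (-(μ+ν)*v) := by
      intro v hv
      rw [hΨ₁, if_pos (by simp only [Set.mem_Ioi] at hv; linarith)]
      rw [mul_assoc, ← Real.exp_add]
      congr 2
      ring
    have hg1c : Continuous g1 := by fun_prop
    have hint1 : IntegrableOn (fun v => Ψ₁ (u - v) * Real.exp (-μ*u - ν*v)) (Set.Ioc 0 u) := by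
      refine (hg1c.integrableOn_Ioc).congr_fun (fun v hv => (hcongr1 v hv).symm) measurableSet_Ioc
    have hint2 : IntegrableOn (fun v => Ψ₁ (u - v) * Real.exp (-μ*u - ν*v)) (Set.Ioi u) := by
      have hbase : IntegrableOn (fun v => ν/(μ+ν) * Real.exp (-(μ+ν)*v)) (Set.Ioi u) :=
        (exp_neg_integrableOn_Ioi u hs).const_mul (ν/(μ+ν))
      exact hbase.congr_fun (fun v hv => (hcongr2 v hv).symm) measurableSet_Ioi
    rw [show Set.Ioi (0:ℝ) = Set.Ioc 0 u ∪ Set.Ioi u from (Set.Ioc_union_Ioi_eq_Ioi hu0.le).symm,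
      setIntegral_union (Set.Ioc_disjoint_Ioi le_rfl) measurableSet_Ioi hint1 hint2]
    rw [setIntegral_congr_fun measurableSet_Ioc hcongr1,
        setIntegral_congr_fun measurableSet_Ioi hcongr2]
    have e1 : ∫ v in Set.Ioc (0:ℝ) u, g1 v
        = Real.exp (-μ*u) * ((1 - Real.exp (-ν*u))/ν) - μ/(μ+ν) * Real.exp (-(μ+ν)*u) * u := by
      rw [← intervalIntegral.integral_of_le hu0.le]
      have hc1 : IntervalIntegrable (fun v => Real.exp (-μ*u) * Real.exp (-ν*v)) volume 0 u :=
        (by fun_prop : Continuous fun v : ℝ => Real.exp (-μ*u) * Real.exp (-ν*v)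
          ).intervalIntegrable 0 u
      have hc2 : IntervalIntegrable (fun _ : ℝ => μ/(μ+ν) * Real.exp (-(μ+ν)*u)) volume 0 u :=
        intervalIntegrable_const
      rw [hg1]
      rw [intervalIntegral.integral_sub hc1 hc2, intervalIntegral.integral_const_mul,
        exp_interval ν u hν.ne', intervalIntegral.integral_const]
      simp [smul_eq_mul]
      ring
    have e2 : ∫ v in Set.Ioi u, ν/(μ+ν) * Real.exp (-(μ+ν)*v)
        = ν/(μ+ν) * (Real.exp (-(μ+ν)*u)/(μ+ν)) := by
      rw [MeasureTheory.integral_const_mul, exp_integral_Ioi u hs]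
    rw [e1, e2]
    simp only [hf]
    have hE : Real.exp (-(μ+ν)*u) = Real.exp (-μ*u) * Real.exp (-ν*u) := by
      rw [← Real.exp_add]; ring_nf
    rw [hE]
    field_simp
    ring
  rw [setIntegral_congr_fun measurableSet_Ioi hinner]
  have i1 : IntegrableOn (fun u : ℝ => (1/ν) * Real.exp (-μ*u)) (Set.Ioi 0) :=
    (exp_neg_integrableOn_Ioi 0 hμ).const_mul _
  have i2 : IntegrableOn (fun u : ℝ => (ν/(μ+ν)^2 - 1/ν) * Real.exp (-(μ+ν)*u)) (Set.Ioi 0) :=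
    (exp_neg_integrableOn_Ioi 0 hs).const_mul _
  have i3 : IntegrableOn (fun u : ℝ => (-(μ/(μ+ν))) * (u * Real.exp (-(μ+ν)*u))) (Set.Ioi 0) :=
    (mul_exp_integrableOn hs).const_mul _
  have key : ∫ u in Set.Ioi (0:ℝ), f u
      = (∫ u in Set.Ioi (0:ℝ), (1/ν) * Real.exp (-μ*u))
        + ((∫ u in Set.Ioi (0:ℝ), (ν/(μ+ν)^2 - 1/ν) * Real.exp (-(μ+ν)*u))
        + (∫ u in Set.Ioi (0:ℝ), (-(μ/(μ+ν))) * (u * Real.exp (-(μ+ν)*u)))) := by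
    have i23 : IntegrableOn (fun u : ℝ => (ν/(μ+ν)^2 - 1/ν) * Real.exp (-(μ+ν)*u)
        + (-(μ/(μ+ν))) * (u * Real.exp (-(μ+ν)*u))) (Set.Ioi 0) := i2.add i3
    rw [← integral_add i2 i3, ← integral_add i1 i23]
    refine setIntegral_congr_fun measurableSet_Ioi (fun u _ => ?_)
    simp only [hf]; ring
  rw [key, MeasureTheory.integral_const_mul, MeasureTheory.integral_const_mul,
    MeasureTheory.integral_const_mul,
    exp_integral_Ioi 0 hμ, exp_integral_Ioi 0 hs, mul_exp_integral hs]
  simp only [mul_zero, neg_zero, Real.exp_zero]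
  field_simp
  ring
end

section
/- Let μ, ν > 0 and define Ψ₁ : ℝ → ℝ by Ψ₁(t) = (ν/(μ+ν))·e^{μt} for t ≤ 0 and Ψ₁(t) = 1 − (μ/(μ+ν))·e^{−νt} for t > 0. Define Ψ₂ by Ψ₂(t) = μν·e^{μt}·∫₀^∞∫₀^∞ Ψ₁(u − v)·e^{−μu−νv} du dv for t ≤ 0, and Ψ₂(t) = μν·e^{−νt}·∫₀^∞∫₀^∞ Ψ₁(u − v)·e^{−μu−νv} du dv + 1 − e^{−νt} for t > 0. Then Ψ₂(t) = (ν²(3μ + ν)/(μ + ν)³)·e^{μt} for t ≤ 0, and Ψ₂(t) = 1 − (μ²(μ + 3ν)/(μ + ν)³)·e^{−νt} for t > 0. -/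
open MeasureTheory Set Filter

/-- Antiderivative of `exp (-b*x)`. -/
lemma aux_exp_hasDerivAt (b : ℝ) (hb : b ≠ 0) (x : ℝ) :
    HasDerivAt (fun x => -Real.exp (-b*x)/b) (Real.exp (-b*x)) x := by
  have h1 : HasDerivAt (fun x : ℝ => -b*x) (-b) x := by
    simpa using (hasDerivAt_id x).const_mul (-b)
  have h2 := (Real.hasDerivAt_exp (-b*x)).comp x h1
  have h3 := h2.neg.div_const b
  refine h3.congr_deriv ?_
  field_simp

lemma aux_exp_tendsto {b : ℝ} (hb : 0 < b) :
    Tendsto (fun x : ℝ => Real.exp (-b*x)) atTop (nhds 0) := by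
  have h0 : Tendsto (fun x : ℝ => b*x) atTop atTop :=
    Tendsto.const_mul_atTop hb tendsto_id
  refine (Real.tendsto_exp_neg_atTop_nhds_zero.comp h0).congr fun x => ?_
  simp [Function.comp, neg_mul]

lemma aux_exp_integral {b : ℝ} (hb : 0 < b) (a : ℝ) :
    ∫ x in Ioi a, Real.exp (-b*x) = Real.exp (-b*a) / b := by
  have h := integral_Ioi_of_hasDerivAt_of_tendsto'
    (f := fun x => -Real.exp (-b*x)/b) (f' := fun x => Real.exp (-b*x)) (a := a) (m := 0)
    (fun x _ => aux_exp_hasDerivAt b hb.ne' x)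
    (exp_neg_integrableOn_Ioi a hb)
    (by simpa using (aux_exp_tendsto hb).neg.div_const b)
  rw [h]; ring

lemma aux_exp_interval (b : ℝ) (hb : b ≠ 0) (a c : ℝ) :
    ∫ x in a..c, Real.exp (-b*x) = (Real.exp (-b*a) - Real.exp (-b*c)) / b := by
  have h := intervalIntegral.integral_eq_sub_of_hasDerivAt
    (f := fun x => -Real.exp (-b*x)/b) (f' := fun x => Real.exp (-b*x)) (a := a) (b := c)
    (fun x _ => aux_exp_hasDerivAt b hb x)
    ((Real.continuous_exp.comp (continuous_const.mul continuous_id)).intervalIntegrable a c)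
  rw [h]; ring

lemma aux_x_exp_integrable {b : ℝ} (hb : 0 < b) :
    IntegrableOn (fun x : ℝ => x * Real.exp (-b*x)) (Ioi 0) := by
  have h := integrableOn_rpow_mul_exp_neg_mul_rpow
    (s := 1) (p := 1) (b := b) (by norm_num) one_pos hb
  refine h.congr_fun (fun x hx => ?_) measurableSet_Ioi
  norm_num [Real.rpow_one]

lemma aux_x_exp_integral {b : ℝ} (hb : 0 < b) :
    ∫ x in Ioi 0, x * Real.exp (-b*x) = 1/b^2 := by
  have h := Real.integral_rpow_mul_exp_neg_mul_Ioi (a := 2) (r := b) two_pos hb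
  have h2 : ∫ x in Ioi (0:ℝ), x * Real.exp (-b*x)
      = ∫ x in Ioi (0:ℝ), x ^ ((2:ℝ)-1) * Real.exp (-(b*x)) := by
    refine setIntegral_congr_fun measurableSet_Ioi (fun x hx => ?_)
    norm_num [Real.rpow_one]
  rw [h2, h, Real.Gamma_two, mul_one]
  rw [show ((1:ℝ)/b) ^ (2:ℝ) = (1/b) ^ (2:ℕ) by
    rw [← Real.rpow_natCast]; norm_num]
  field_simp

lemma aux_inner (μ ν : ℝ) (hμ : 0 < μ) (hν : 0 < ν)
    (Ψ₁ : ℝ → ℝ)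
    (hΨ₁ : ∀ t : ℝ, Ψ₁ t = if t ≤ 0 then ν/(μ+ν) * Real.exp (μ*t)
      else 1 - μ/(μ+ν) * Real.exp (-ν*t))
    {u : ℝ} (hu : 0 < u) :
    ∫ v in Ioi (0:ℝ), Ψ₁ (u - v) * Real.exp (-μ*u - ν*v)
      = (1/ν) * Real.exp (-μ*u) - (1/ν) * Real.exp (-(μ+ν)*u)
        - (μ/(μ+ν)) * (u * Real.exp (-(μ+ν)*u))
        + (ν/((μ+ν)*(μ+ν))) * Real.exp (-(μ+ν)*u) := by
  have hμν : (0:ℝ) < μ + ν := by linarith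
  set f : ℝ → ℝ := fun v => Ψ₁ (u - v) * Real.exp (-μ*u - ν*v) with hf
  set g₁ : ℝ → ℝ := fun v =>
    Real.exp (-μ*u) * Real.exp (-ν*v) - μ/(μ+ν) * Real.exp (-(μ+ν)*u) with hg₁
  -- a.e. equality on Ioc 0 u
  have hne : ∀ᵐ v : ℝ, v ≠ u := by
    rw [ae_iff]
    simpa [not_not, Set.setOf_eq_eq_singleton] using measure_singleton u
  have hae : f =ᵐ[volume.restrict (Ioc 0 u)] g₁ := by
    filter_upwards [ae_restrict_of_ae hne, ae_restrict_mem measurableSet_Ioc] with v hv hv2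
    have hvu : v < u := lt_of_le_of_ne hv2.2 hv
    have hpos : ¬ (u - v ≤ 0) := by simp; linarith
    have e1 : Real.exp (-ν*(u-v)) * Real.exp (-μ*u - ν*v) = Real.exp (-(μ+ν)*u) := by
      rw [← Real.exp_add]; congr 1; ring
    have e2 : Real.exp (-μ*u - ν*v) = Real.exp (-μ*u) * Real.exp (-ν*v) := by
      rw [← Real.exp_add]; congr 1; ring
    simp only [hf, hg₁, hΨ₁, if_neg hpos]
    calc (1 - μ/(μ+ν) * Real.exp (-ν*(u-v))) * Real.exp (-μ*u - ν*v)
        = Real.exp (-μ*u - ν*v)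
          - μ/(μ+ν) * (Real.exp (-ν*(u-v)) * Real.exp (-μ*u - ν*v)) := by ring
      _ = _ := by rw [e1, e2]
  have hg₁cont : Continuous g₁ := by
    apply Continuous.sub
    · exact continuous_const.mul (Real.continuous_exp.comp (continuous_const.mul continuous_id))
    · exact continuous_const
  have hint1 : IntegrableOn f (Ioc 0 u) :=
    (hg₁cont.integrableOn_Ioc).congr hae.symm
  -- on Ioi u
  have heq2 : EqOn f (fun v => ν/(μ+ν) * Real.exp (-(μ+ν)*v)) (Ioi u) := by
    intro v hv
    have hvu : u < v := hv
    have hle : u - v ≤ 0 := by linarith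
    have e1 : Real.exp (μ*(u-v)) * Real.exp (-μ*u - ν*v) = Real.exp (-(μ+ν)*v) := by
      rw [← Real.exp_add]; congr 1; ring
    simp only [hf, hΨ₁, if_pos hle]
    rw [mul_assoc, e1]
  have hint2 : IntegrableOn f (Ioi u) := by
    have base : IntegrableOn (fun v : ℝ => ν/(μ+ν) * Real.exp (-(μ+ν)*v)) (Ioi u) :=
      (exp_neg_integrableOn_Ioi u hμν).const_mul _
    exact base.congr_fun (fun v hv => (heq2 hv).symm) measurableSet_Ioi
  have hsplit : Ioc 0 u ∪ Ioi u = Ioi (0:ℝ) := Ioc_union_Ioi_eq_Ioi hu.le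
  have hunion : ∫ v in Ioi (0:ℝ), f v
      = (∫ v in Ioc 0 u, f v) + ∫ v in Ioi u, f v := by
    rw [← hsplit]
    exact setIntegral_union Ioc_disjoint_Ioi_same measurableSet_Ioi hint1 hint2
  -- value on Ioc
  have hval1 : ∫ v in Ioc 0 u, f v
      = (1/ν) * Real.exp (-μ*u) - (1/ν) * Real.exp (-(μ+ν)*u)
        - (μ/(μ+ν)) * (u * Real.exp (-(μ+ν)*u)) := by
    rw [integral_congr_ae hae, ← intervalIntegral.integral_of_le hu.le]
    have hi1 : IntervalIntegrable (fun v => Real.exp (-μ*u) * Real.exp (-ν*v)) volume 0 u :=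
      (continuous_const.mul
        (Real.continuous_exp.comp (continuous_const.mul continuous_id))).intervalIntegrable 0 u
    have hi2 : IntervalIntegrable (fun _ : ℝ => μ/(μ+ν) * Real.exp (-(μ+ν)*u)) volume 0 u :=
      intervalIntegrable_const
    rw [intervalIntegral.integral_sub hi1 hi2, intervalIntegral.integral_const_mul,
      aux_exp_interval ν hν.ne' 0 u, intervalIntegral.integral_const]
    have e3 : Real.exp (-μ*u) * Real.exp (-ν*u) = Real.exp (-(μ+ν)*u) := by
      rw [← Real.exp_add]; congr 1; ring
    simp only [mul_zero, neg_zero, Real.exp_zero, smul_eq_mul, sub_zero]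
    linear_combination (-1/ν) * e3
  have hval2 : ∫ v in Ioi u, f v
      = (ν/((μ+ν)*(μ+ν))) * Real.exp (-(μ+ν)*u) := by
    rw [setIntegral_congr_fun measurableSet_Ioi heq2, integral_const_mul,
      aux_exp_integral hμν u]
    field_simp
  show ∫ v in Ioi (0:ℝ), f v = _
  rw [hunion, hval1, hval2]

/-- The second distribution function `Ψ₂`, obtained from `Ψ₁` by the one-step
recursion, has the closed form `Ψ₂(t) = (ν²(3μ+ν)/(μ+ν)³)·e^{μt}` for `t ≤ 0` and
`Ψ₂(t) = 1 - (μ²(μ+3ν)/(μ+ν)³)·e^{-νt}` for `t > 0`. -/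
theorem psi_two_closed_form (μ ν : ℝ) (hμ : 0 < μ) (hν : 0 < ν)
    (Ψ₁ Ψ₂ : ℝ → ℝ)
    (hΨ₁ : ∀ t : ℝ, Ψ₁ t = if t ≤ 0 then ν/(μ+ν) * Real.exp (μ*t)
      else 1 - μ/(μ+ν) * Real.exp (-ν*t))
    (hΨ₂ : ∀ t : ℝ, Ψ₂ t =
      if t ≤ 0 then
        μ * ν * Real.exp (μ*t) *
          ∫ u in Set.Ioi (0:ℝ), ∫ v in Set.Ioi (0:ℝ), Ψ₁ (u - v) * Real.exp (-μ*u - ν*v)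
      else
        μ * ν * Real.exp (-ν*t) *
          (∫ u in Set.Ioi (0:ℝ), ∫ v in Set.Ioi (0:ℝ), Ψ₁ (u - v) * Real.exp (-μ*u - ν*v))
          + 1 - Real.exp (-ν*t)) :
    (∀ t : ℝ, t ≤ 0 → Ψ₂ t = ν^2*(3*μ+ν)/(μ+ν)^3 * Real.exp (μ*t)) ∧
    (∀ t : ℝ, 0 < t → Ψ₂ t = 1 - μ^2*(μ+3*ν)/(μ+ν)^3 * Real.exp (-ν*t)) := by
  have hμν : (0:ℝ) < μ + ν := by linarith
  -- compute the double integral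
  have hI : (∫ u in Ioi (0:ℝ), ∫ v in Ioi (0:ℝ), Ψ₁ (u - v) * Real.exp (-μ*u - ν*v))
      = 1/(ν*μ) - 1/(ν*(μ+ν)) - (μ/(μ+ν)) * (1/(μ+ν)^2)
        + (ν/((μ+ν)*(μ+ν))) * (1/(μ+ν)) := by
    have hcongr : ∫ u in Ioi (0:ℝ), (∫ v in Ioi (0:ℝ), Ψ₁ (u - v) * Real.exp (-μ*u - ν*v))
        = ∫ u in Ioi (0:ℝ),
            ((1/ν) * Real.exp (-μ*u) - (1/ν) * Real.exp (-(μ+ν)*u)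
              - (μ/(μ+ν)) * (u * Real.exp (-(μ+ν)*u))
              + (ν/((μ+ν)*(μ+ν))) * Real.exp (-(μ+ν)*u)) := by
      refine setIntegral_congr_fun measurableSet_Ioi (fun u hu => ?_)
      exact aux_inner μ ν hμ hν Ψ₁ hΨ₁ hu
    rw [hcongr]
    have h1 : IntegrableOn (fun u : ℝ => (1/ν) * Real.exp (-μ*u)) (Ioi 0) :=
      (exp_neg_integrableOn_Ioi 0 hμ).const_mul _
    have h2 : IntegrableOn (fun u : ℝ => (1/ν) * Real.exp (-(μ+ν)*u)) (Ioi 0) :=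
      (exp_neg_integrableOn_Ioi 0 hμν).const_mul _
    have h3 : IntegrableOn (fun u : ℝ => (μ/(μ+ν)) * (u * Real.exp (-(μ+ν)*u))) (Ioi 0) :=
      (aux_x_exp_integrable hμν).const_mul _
    have h4 : IntegrableOn (fun u : ℝ => (ν/((μ+ν)*(μ+ν))) * Real.exp (-(μ+ν)*u)) (Ioi 0) :=
      (exp_neg_integrableOn_Ioi 0 hμν).const_mul _
    have h12 : IntegrableOn (fun u : ℝ =>
        (1/ν) * Real.exp (-μ*u) - (1/ν) * Real.exp (-(μ+ν)*u)) (Ioi 0) := h1.sub h2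
    have h123 : IntegrableOn (fun u : ℝ =>
        (1/ν) * Real.exp (-μ*u) - (1/ν) * Real.exp (-(μ+ν)*u)
          - (μ/(μ+ν)) * (u * Real.exp (-(μ+ν)*u))) (Ioi 0) := h12.sub h3
    rw [integral_add h123 h4, integral_sub h12 h3,
      integral_sub h1 h2, integral_const_mul, integral_const_mul, integral_const_mul,
      integral_const_mul, aux_exp_integral hμ 0, aux_exp_integral hμν 0,
      aux_x_exp_integral hμν]
    norm_num
    ring
  constructor
  · intro t ht
    rw [hΨ₂, if_pos ht, hI]
    have h3 : ((μ:ℝ)+ν)^3 ≠ 0 := by positivity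
    field_simp
    ring
  · intro t ht
    rw [hΨ₂, if_neg (not_le.2 ht), hI]
    have h3 : ((μ:ℝ)+ν)^3 ≠ 0 := by positivity
    field_simp
    ring
end

section
/- Let μ, ν > 0 and let c₁, c₂ be real numbers with Ψ(t) = c₁·e^{μt} for t ≤ 0 and Ψ(t) = 1 − c₂·e^{−νt} for t > 0. Then μν·∫₀^∞∫₀^∞ Ψ(u − v)·e^{−μu−νv} du dv = (μν/(μ+ν)²)·c₁ − (μν/(μ+ν)²)·c₂ + ν/(μ+ν). -/
open MeasureTheory

private lemma aux_exp_Ioi {a : ℝ} (ha : 0 < a) (b : ℝ) :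
    ∫ v in Set.Ioi b, Real.exp (-a*v) = Real.exp (-a*b)/a := by
  have hderiv : ∀ x ∈ Set.Ici b, HasDerivAt (fun x => -Real.exp (-a*x)/a) (Real.exp (-a*x)) x := by
    intro x _
    have h1 : HasDerivAt (fun x : ℝ => -a*x) (-a) x := by
      simpa using (hasDerivAt_id x).const_mul (-a)
    have h2 := (h1.exp.neg.div_const a)
    refine h2.congr_deriv ?_
    field_simp
  have htend : Filter.Tendsto (fun x => -Real.exp (-a*x)/a) Filter.atTop (nhds 0) := by
    have h0 : Filter.Tendsto (fun x : ℝ => a*x) Filter.atTop Filter.atTop :=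
      Filter.tendsto_id.const_mul_atTop ha
    have h1 : Filter.Tendsto (fun x : ℝ => Real.exp (-(a*x))) Filter.atTop (nhds 0) :=
      Real.tendsto_exp_neg_atTop_nhds_zero.comp h0
    have h2 := (h1.neg.div_const a)
    simp only [neg_mul] at *
    simpa using h2
  have hint : IntegrableOn (fun x => Real.exp (-a*x)) (Set.Ioi b) :=
    exp_neg_integrableOn_Ioi b ha
  have := integral_Ioi_of_hasDerivAt_of_tendsto' hderiv hint htend
  rw [this]
  field_simp
  ring

private lemma aux_xexp_deriv {a : ℝ} (ha : 0 < a) :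
    ∀ x ∈ Set.Ici (0:ℝ), HasDerivAt (fun x => -(x/a + 1/a^2) * Real.exp (-a*x))
      (x * Real.exp (-a*x)) x := by
  intro x _
  have h1 : HasDerivAt (fun x : ℝ => -(x/a + 1/a^2)) (-(1/a)) x :=
    (((hasDerivAt_id x).div_const a).add_const (1/a^2)).neg
  have h2 : HasDerivAt (fun x : ℝ => Real.exp (-a*x)) (Real.exp (-a*x) * (-a)) x := by
    have : HasDerivAt (fun x : ℝ => -a*x) (-a) x := by
      simpa using (hasDerivAt_id x).const_mul (-a)
    exact this.exp
  have h3 := h1.mul h2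
  refine h3.congr_deriv ?_
  field_simp
  ring

private lemma aux_xexp_tendsto {a : ℝ} (ha : 0 < a) :
    Filter.Tendsto (fun x => -(x/a + 1/a^2) * Real.exp (-a*x)) Filter.atTop (nhds 0) := by
  have h0 : Filter.Tendsto (fun x : ℝ => a*x) Filter.atTop Filter.atTop :=
    Filter.tendsto_id.const_mul_atTop ha
  have h1 : Filter.Tendsto (fun x : ℝ => (a*x)^1 * Real.exp (-(a*x))) Filter.atTop (nhds 0) :=
    (Real.tendsto_pow_mul_exp_neg_atTop_nhds_zero 1).comp h0
  have hx : Filter.Tendsto (fun x : ℝ => x * Real.exp (-a*x)) Filter.atTop (nhds 0) := by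
    have h2 := h1.const_mul (1/a)
    rw [mul_zero] at h2
    refine h2.congr (fun x => ?_)
    simp only [pow_one, ← neg_mul]
    field_simp
  have he : Filter.Tendsto (fun x : ℝ => Real.exp (-a*x)) Filter.atTop (nhds 0) := by
    have h3 := Real.tendsto_exp_neg_atTop_nhds_zero.comp h0
    exact h3.congr (fun x => by rw [Function.comp_apply, neg_mul])
  have hsum := (hx.const_mul (-(1/a))).add (he.const_mul (-(1/a^2)))
  rw [mul_zero, mul_zero, add_zero] at hsum
  exact hsum.congr (fun x => by ring)

private lemma aux_xexp_integrable {a : ℝ} (ha : 0 < a) :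
    IntegrableOn (fun x => x * Real.exp (-a*x)) (Set.Ioi (0:ℝ)) :=
  integrableOn_Ioi_deriv_of_nonneg' (aux_xexp_deriv ha)
    (fun x hx => mul_nonneg (le_of_lt hx) (Real.exp_pos _).le) (aux_xexp_tendsto ha)

private lemma aux_xexp_Ioi {a : ℝ} (ha : 0 < a) :
    ∫ x in Set.Ioi (0:ℝ), x * Real.exp (-a*x) = 1/a^2 := by
  have := integral_Ioi_of_hasDerivAt_of_nonneg' (aux_xexp_deriv ha)
    (fun x hx => mul_nonneg (le_of_lt hx) (Real.exp_pos _).le) (aux_xexp_tendsto ha)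
  rw [this]
  simp

/-- For a function of the form `Ψ(t) = c₁e^{μt}` for `t ≤ 0`,
`Ψ(t) = 1 - c₂e^{-νt}` for `t > 0`, the double integral `μν·∬ Ψ(u-v)e^{-μu-νv} du dv`
equals `(μν/(μ+ν)²)c₁ - (μν/(μ+ν)²)c₂ + ν/(μ+ν)`. -/
theorem double_integral_ansatz (μ ν : ℝ) (hμ : 0 < μ) (hν : 0 < ν) (c₁ c₂ : ℝ)
    (Ψ : ℝ → ℝ)
    (hΨ : ∀ t : ℝ, Ψ t = if t ≤ 0 then c₁ * Real.exp (μ*t) else 1 - c₂ * Real.exp (-ν*t)) :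
    μ * ν * ∫ u in Set.Ioi (0:ℝ), ∫ v in Set.Ioi (0:ℝ), Ψ (u - v) * Real.exp (-μ*u - ν*v)
      = μ*ν/(μ+ν)^2 * c₁ - μ*ν/(μ+ν)^2 * c₂ + ν/(μ+ν) := by
  have hS : 0 < μ + ν := by linarith
  -- closed form of the inner integral
  set g : ℝ → ℝ := fun u => (1/ν) * Real.exp (-μ*u)
      + (c₁/(μ+ν) - 1/ν) * Real.exp (-(μ+ν)*u) - c₂ * (u * Real.exp (-(μ+ν)*u)) with hg
  have inner_eq : ∀ u ∈ Set.Ioi (0:ℝ),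
      (∫ v in Set.Ioi (0:ℝ), Ψ (u - v) * Real.exp (-μ*u - ν*v)) = g u := by
    intro u hu
    rw [Set.mem_Ioi] at hu
    have hsplit : Set.Ioo (0:ℝ) u ∪ Set.Ici u = Set.Ioi 0 := Set.Ioo_union_Ici_eq_Ioi hu
    have hdisj : Disjoint (Set.Ioo (0:ℝ) u) (Set.Ici u) := by
      rw [Set.disjoint_left]
      intro v hv hv'
      exact absurd hv' (not_le.mpr hv.2)
    -- the two closed-form pieces
    have e1 : ∀ v ∈ Set.Ioo (0:ℝ) u, Ψ (u - v) * Real.exp (-μ*u - ν*v)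
        = Real.exp (-μ*u) * Real.exp (-ν*v) - c₂ * Real.exp (-μ*u) * Real.exp (-ν*u) := by
      intro v hv
      rw [hΨ]
      rw [if_neg (by linarith [hv.2] : ¬ (u - v ≤ 0))]
      have ha : Real.exp (-μ*u - ν*v) = Real.exp (-μ*u) * Real.exp (-ν*v) := by
        rw [← Real.exp_add]; congr 1; ring
      have hb : Real.exp (-ν*(u-v)) * Real.exp (-μ*u - ν*v)
          = Real.exp (-μ*u) * Real.exp (-ν*u) := by
        rw [← Real.exp_add, ← Real.exp_add]; congr 1; ring
      linear_combination ha - c₂ * hb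
    have e2 : ∀ v ∈ Set.Ici u, Ψ (u - v) * Real.exp (-μ*u - ν*v)
        = c₁ * Real.exp (-(μ+ν)*v) := by
      intro v hv
      rw [Set.mem_Ici] at hv
      rw [hΨ]
      rw [if_pos (by linarith : u - v ≤ 0)]
      have hb : Real.exp (μ*(u-v)) * Real.exp (-μ*u - ν*v) = Real.exp (-(μ+ν)*v) := by
        rw [← Real.exp_add]; congr 1; ring
      rw [mul_assoc, hb]
    have hi1 : IntegrableOn (fun v => Ψ (u - v) * Real.exp (-μ*u - ν*v)) (Set.Ioo 0 u) := by
      rw [integrableOn_congr_fun e1 measurableSet_Ioo]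
      apply Integrable.sub
      · exact ((exp_neg_integrableOn_Ioi 0 hν).mono_set Set.Ioo_subset_Ioi_self).const_mul _
      · exact (integrableOn_const_iff).mpr (Or.inr measure_Ioo_lt_top)
    have hi2 : IntegrableOn (fun v => Ψ (u - v) * Real.exp (-μ*u - ν*v)) (Set.Ici u) := by
      rw [integrableOn_congr_fun e2 measurableSet_Ici]
      have : IntegrableOn (fun v => Real.exp (-(μ+ν)*v)) (Set.Ici u) :=
        (integrableOn_Ici_iff_integrableOn_Ioi).mpr (exp_neg_integrableOn_Ioi u hS)
      exact this.const_mul _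
    rw [← hsplit, setIntegral_union hdisj measurableSet_Ici hi1 hi2]
    rw [setIntegral_congr_fun measurableSet_Ioo e1,
        setIntegral_congr_fun measurableSet_Ici e2]
    -- compute first piece
    have hIoo : ∫ v in Set.Ioo (0:ℝ) u, Real.exp (-ν*v) = 1/ν - Real.exp (-ν*u)/ν := by
      have h1 : ∫ v in Set.Ioi (0:ℝ), Real.exp (-ν*v) = 1/ν := by
        rw [aux_exp_Ioi hν 0]; simp
      have h2 : ∫ v in Set.Ici u, Real.exp (-ν*v) = Real.exp (-ν*u)/ν := by
        rw [integral_Ici_eq_integral_Ioi, aux_exp_Ioi hν u]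
      have hu1 : IntegrableOn (fun v => Real.exp (-ν*v)) (Set.Ioo 0 u) :=
        (exp_neg_integrableOn_Ioi 0 hν).mono_set Set.Ioo_subset_Ioi_self
      have hu2 : IntegrableOn (fun v => Real.exp (-ν*v)) (Set.Ici u) :=
        (integrableOn_Ici_iff_integrableOn_Ioi).mpr (exp_neg_integrableOn_Ioi u hν)
      have := setIntegral_union hdisj measurableSet_Ici hu1 hu2
        (f := fun v => Real.exp (-ν*v)) (μ := volume)
      rw [hsplit, h1, h2] at this
      linarith
    have p1 : ∫ v in Set.Ioo (0:ℝ) u,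
        (Real.exp (-μ*u) * Real.exp (-ν*v) - c₂ * Real.exp (-μ*u) * Real.exp (-ν*u))
        = Real.exp (-μ*u) * (1/ν - Real.exp (-ν*u)/ν)
          - c₂ * Real.exp (-μ*u) * Real.exp (-ν*u) * u := by
      rw [integral_sub (((exp_neg_integrableOn_Ioi 0 hν).mono_set
            Set.Ioo_subset_Ioi_self).const_mul _)
          ((integrableOn_const_iff).mpr (Or.inr measure_Ioo_lt_top))]
      rw [integral_const, integral_const_mul, hIoo]
      simp only [measureReal_def, MeasurableSet.univ, Measure.restrict_apply, Set.univ_inter,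
        Real.volume_Ioo, smul_eq_mul]
      rw [ENNReal.toReal_ofReal (by linarith : (0:ℝ) ≤ u - 0)]
      ring
    have p2 : ∫ v in Set.Ici u, c₁ * Real.exp (-(μ+ν)*v)
        = c₁ * (Real.exp (-(μ+ν)*u)/(μ+ν)) := by
      rw [integral_Ici_eq_integral_Ioi, integral_const_mul, aux_exp_Ioi hS u]
    rw [p1, p2, hg]
    have hmul : Real.exp (-μ*u) * Real.exp (-ν*u) = Real.exp (-(μ+ν)*u) := by
      rw [← Real.exp_add]; ring_nf
    linear_combination (-(1/ν) - c₂*u) * hmul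
  rw [setIntegral_congr_fun measurableSet_Ioi inner_eq]
  have i1 : IntegrableOn (fun u => (1/ν) * Real.exp (-μ*u)) (Set.Ioi (0:ℝ)) :=
    (exp_neg_integrableOn_Ioi 0 hμ).const_mul _
  have i2 : IntegrableOn (fun u => (c₁/(μ+ν) - 1/ν) * Real.exp (-(μ+ν)*u)) (Set.Ioi (0:ℝ)) :=
    (exp_neg_integrableOn_Ioi 0 hS).const_mul _
  have i3 : IntegrableOn (fun u => c₂ * (u * Real.exp (-(μ+ν)*u))) (Set.Ioi (0:ℝ)) :=
    (aux_xexp_integrable hS).const_mul _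
  have : ∫ u in Set.Ioi (0:ℝ), g u
      = (1/ν) * (1/μ) + (c₁/(μ+ν) - 1/ν) * (1/(μ+ν)) - c₂ * (1/(μ+ν)^2) := by
    rw [hg]
    simp only
    have i12 : IntegrableOn (fun u => (1/ν) * Real.exp (-μ*u)
        + (c₁/(μ+ν) - 1/ν) * Real.exp (-(μ+ν)*u)) (Set.Ioi (0:ℝ)) := i1.add i2
    rw [integral_sub i12 i3, integral_add i1 i2,
      integral_const_mul, integral_const_mul, integral_const_mul,
      aux_xexp_Ioi hS]
    have e1 : ∫ u in Set.Ioi (0:ℝ), Real.exp (-μ*u) = 1/μ := by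
      rw [aux_exp_Ioi hμ 0]; simp
    have e2 : ∫ u in Set.Ioi (0:ℝ), Real.exp (-(μ+ν)*u) = 1/(μ+ν) := by
      rw [aux_exp_Ioi hS 0]; simp
    rw [e1, e2]
  rw [this]
  field_simp
  ring
end

section
/- Let μ, ν > 0 and define Ψ : ℝ → ℝ by Ψ(t) = (ν²/(μ²+ν²))·e^{μt} for t ≤ 0 and Ψ(t) = 1 − (μ²/(μ²+ν²))·e^{−νt} for t > 0. Then Ψ satisfies the fixed-point equation: Ψ(t) = μν·e^{μt}·∫₀^∞∫₀^∞ Ψ(u − v)·e^{−μu−νv} du dv for all t ≤ 0, and Ψ(t) = μν·e^{−νt}·∫₀^∞∫₀^∞ Ψ(u − v)·e^{−μu−νv} du dv + 1 − e^{−νt} for all t > 0. -/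
open MeasureTheory

open Set Real Filter
lemma expDeriv (b x : ℝ) (hb : b ≠ 0) :
    HasDerivAt (fun x => -Real.exp (-(b*x))/b) (Real.exp (-(b*x))) x := by
  have h0 : HasDerivAt (fun x : ℝ => -(b*x)) (-b) x := by
    simpa [Pi.neg_def] using ((hasDerivAt_id x).const_mul b).neg
  have h2 := (Real.hasDerivAt_exp (-(b*x))).comp x h0
  convert (h2.neg.div_const b) using 1
  · rfl
  · rfl
  · rfl
  · field_simp

lemma expIoi {b : ℝ} (hb : 0 < b) (a : ℝ) :
    ∫ x in Set.Ioi a, Real.exp (-(b*x)) = Real.exp (-(b*a)) / b := by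
  have hint : IntegrableOn (fun x => Real.exp (-(b*x))) (Set.Ioi a) := by
    simpa [neg_mul] using exp_neg_integrableOn_Ioi a hb
  have htend : Tendsto (fun x => -Real.exp (-(b*x))/b) atTop (nhds 0) := by
    have h1 : Tendsto (fun x : ℝ => b*x) atTop atTop :=
      Tendsto.const_mul_atTop hb tendsto_id
    have h2 := (Real.tendsto_exp_neg_atTop_nhds_zero.comp h1).neg.div_const b
    simpa using h2
  have := integral_Ioi_of_hasDerivAt_of_tendsto'
    (fun x _ => expDeriv b x hb.ne') hint htend
  rw [this]; ring

lemma expIoc {b : ℝ} (hb : 0 < b) {u : ℝ} (hu : 0 ≤ u) :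
    ∫ v in Set.Ioc (0:ℝ) u, Real.exp (-(b*v)) = (1 - Real.exp (-(b*u)))/b := by
  rw [← intervalIntegral.integral_of_le hu]
  rw [intervalIntegral.integral_eq_sub_of_hasDerivAt
    (fun x _ => expDeriv b x hb.ne')
    ((Real.continuous_exp.comp (by continuity)).intervalIntegrable 0 u)]
  simp only [mul_zero, neg_zero, Real.exp_zero]
  ring

lemma xExpIoi {b : ℝ} (hb : 0 < b) :
    ∫ x in Set.Ioi (0:ℝ), x * Real.exp (-(b*x)) = 1/b^2 := by
  have h := integral_rpow_mul_exp_neg_mul_Ioi (a := 2) (r := b) two_pos hb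
  rw [Real.Gamma_two, mul_one] at h
  rw [show ∫ x in Set.Ioi (0:ℝ), x * Real.exp (-(b*x))
      = ∫ t in Set.Ioi (0:ℝ), t ^ ((2:ℝ)-1) * Real.exp (-(b*t)) from
    setIntegral_congr_fun measurableSet_Ioi (fun t _ => by norm_num), h]
  rw [show ((2:ℝ)) = ((2:ℕ):ℝ) by norm_num, Real.rpow_natCast]
  field_simp

lemma xExpInt {b : ℝ} (hb : 0 < b) :
    IntegrableOn (fun x => x * Real.exp (-(b*x))) (Set.Ioi (0:ℝ)) := by
  have h := integrableOn_rpow_mul_exp_neg_mul_rpow (s := 1) (p := 1)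
    (by norm_num) zero_lt_one hb
  exact h.congr_fun (fun x _ => by simp [Real.rpow_one, neg_mul]) measurableSet_Ioi

lemma inner_eq (μ ν : ℝ) (hμ : 0 < μ) (hν : 0 < ν) (Ψ : ℝ → ℝ)
    (hΨ : ∀ t : ℝ, Ψ t = if t ≤ 0 then ν^2/(μ^2+ν^2) * Real.exp (μ*t)
      else 1 - μ^2/(μ^2+ν^2) * Real.exp (-ν*t))
    {u : ℝ} (hu : 0 < u) :
    ∫ v in Set.Ioi (0:ℝ), Ψ (u - v) * Real.exp (-μ*u - ν*v)
    = (1/ν) * Real.exp (-(μ*u))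
      + (-(1/ν) + ν^2/(μ^2+ν^2)/(μ+ν)) * Real.exp (-((μ+ν)*u))
      + (-(μ^2/(μ^2+ν^2))) * (u * Real.exp (-((μ+ν)*u))) := by
  have hA : (0:ℝ) < μ^2+ν^2 := by positivity
  have hd : ν^2/(μ^2+ν^2) = 1 - μ^2/(μ^2+ν^2) := by field_simp; ring
  have e1 : ∀ v ∈ Set.Ioc (0:ℝ) u, Ψ (u - v) * Real.exp (-μ*u - ν*v)
      = Real.exp (-(μ*u)) * Real.exp (-(ν*v)) - μ^2/(μ^2+ν^2) * Real.exp (-((μ+ν)*u)) := by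
    intro v hv
    rw [hΨ]
    rcases eq_or_lt_of_le hv.2 with h | h
    · subst h
      rw [sub_self, if_pos le_rfl, mul_zero, Real.exp_zero, mul_one, hd]
      rw [show -μ*v - ν*v = -((μ+ν)*v) by ring,
        show Real.exp (-(μ*v)) * Real.exp (-(ν*v)) = Real.exp (-((μ+ν)*v)) by
          rw [← Real.exp_add]; ring_nf]
      ring
    · rw [if_neg (by linarith : ¬ (u - v ≤ 0))]
      rw [sub_mul, one_mul, mul_assoc, ← Real.exp_add, ← Real.exp_add,
        show -ν*(u-v) + (-μ*u - ν*v) = -((μ+ν)*u) by ring,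
        show -(μ*u) + -(ν*v) = -μ*u - ν*v by ring]
  have e2 : ∀ v ∈ Set.Ioi u, Ψ (u - v) * Real.exp (-μ*u - ν*v)
      = ν^2/(μ^2+ν^2) * Real.exp (-((μ+ν)*v)) := by
    intro v hv
    rw [hΨ, if_pos (by linarith [Set.mem_Ioi.mp hv] : u - v ≤ 0), mul_assoc,
      ← Real.exp_add, show μ*(u-v) + (-μ*u - ν*v) = -((μ+ν)*v) by ring]
  have i1 : IntegrableOn
      (fun v => Real.exp (-(μ*u)) * Real.exp (-(ν*v)) - μ^2/(μ^2+ν^2) * Real.exp (-((μ+ν)*u)))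
      (Set.Ioc (0:ℝ) u) := by
    apply Continuous.integrableOn_Ioc
    fun_prop
  have i2 : IntegrableOn (fun v => ν^2/(μ^2+ν^2) * Real.exp (-((μ+ν)*v))) (Set.Ioi u) := by
    apply Integrable.const_mul
    simpa only [neg_mul, IntegrableOn] using exp_neg_integrableOn_Ioi u (by linarith : (0:ℝ) < μ+ν)
  have h1 : IntegrableOn (fun v => Ψ (u - v) * Real.exp (-μ*u - ν*v)) (Set.Ioc (0:ℝ) u) :=
    i1.congr_fun (fun v hv => (e1 v hv).symm) measurableSet_Ioc
  have h2 : IntegrableOn (fun v => Ψ (u - v) * Real.exp (-μ*u - ν*v)) (Set.Ioi u) :=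
    i2.congr_fun (fun v hv => (e2 v hv).symm) measurableSet_Ioi
  rw [← Set.Ioc_union_Ioi_eq_Ioi hu.le,
    setIntegral_union (Set.Ioc_disjoint_Ioi le_rfl) measurableSet_Ioi h1 h2,
    setIntegral_congr_fun measurableSet_Ioc e1,
    setIntegral_congr_fun measurableSet_Ioi e2]
  have hIoc : (∫ v in Set.Ioc (0:ℝ) u,
      (Real.exp (-(μ*u)) * Real.exp (-(ν*v)) - μ^2/(μ^2+ν^2) * Real.exp (-((μ+ν)*u))))
      = Real.exp (-(μ*u)) * ((1 - Real.exp (-(ν*u)))/ν)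
        - u * (μ^2/(μ^2+ν^2) * Real.exp (-((μ+ν)*u))) := by
    rw [integral_sub (by apply Continuous.integrableOn_Ioc; fun_prop)
        (by apply Continuous.integrableOn_Ioc; fun_prop),
      integral_const_mul, expIoc hν hu.le, setIntegral_const]
    simp [Real.volume_Ioc, ENNReal.toReal_ofReal hu.le, hu.le]
  have hIoi : (∫ v in Set.Ioi u, ν^2/(μ^2+ν^2) * Real.exp (-((μ+ν)*v)))
      = ν^2/(μ^2+ν^2) * (Real.exp (-((μ+ν)*u))/(μ+ν)) := by
    rw [integral_const_mul, expIoi (by linarith : (0:ℝ) < μ+ν) u]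
  rw [hIoc, hIoi]
  have hE : Real.exp (-(μ*u)) * Real.exp (-(ν*u)) = Real.exp (-((μ+ν)*u)) := by
    rw [← Real.exp_add]; ring_nf
  have hν' := hν.ne'
  have key : Real.exp (-(μ*u)) * ((1 - Real.exp (-(ν*u)))/ν)
      = (1/ν) * Real.exp (-(μ*u)) - (1/ν) * Real.exp (-((μ+ν)*u)) := by
    rw [← hE]; field_simp
  rw [key]; ring

lemma key_integral (μ ν : ℝ) (hμ : 0 < μ) (hν : 0 < ν) (Ψ : ℝ → ℝ)
    (hΨ : ∀ t : ℝ, Ψ t = if t ≤ 0 then ν^2/(μ^2+ν^2) * Real.exp (μ*t)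
      else 1 - μ^2/(μ^2+ν^2) * Real.exp (-ν*t)) :
    ∫ u in Set.Ioi (0:ℝ), ∫ v in Set.Ioi (0:ℝ), Ψ (u - v) * Real.exp (-μ*u - ν*v)
      = ν/(μ*(μ^2+ν^2)) := by
  have hμν : (0:ℝ) < μ+ν := by linarith
  have hA : (0:ℝ) < μ^2+ν^2 := by positivity
  rw [setIntegral_congr_fun measurableSet_Ioi
    (fun u hu => inner_eq μ ν hμ hν Ψ hΨ (Set.mem_Ioi.mp hu))]
  have j1 : IntegrableOn (fun u => (1/ν) * Real.exp (-(μ*u))) (Set.Ioi (0:ℝ)) :=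
    Integrable.const_mul (by simpa only [neg_mul, IntegrableOn] using exp_neg_integrableOn_Ioi 0 hμ) _
  have j2 : IntegrableOn
      (fun u => (-(1/ν) + ν^2/(μ^2+ν^2)/(μ+ν)) * Real.exp (-((μ+ν)*u))) (Set.Ioi (0:ℝ)) :=
    Integrable.const_mul (by simpa only [neg_mul, IntegrableOn] using exp_neg_integrableOn_Ioi 0 hμν) _
  have j3 : IntegrableOn
      (fun u => (-(μ^2/(μ^2+ν^2))) * (u * Real.exp (-((μ+ν)*u)))) (Set.Ioi (0:ℝ)) :=
    Integrable.const_mul (xExpInt hμν) _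
  have j12 : IntegrableOn (fun u => (1/ν) * Real.exp (-(μ*u))
      + (-(1/ν) + ν^2/(μ^2+ν^2)/(μ+ν)) * Real.exp (-((μ+ν)*u))) (Set.Ioi (0:ℝ)) := j1.add j2
  rw [integral_add j12 j3, integral_add j1 j2,
    integral_const_mul, integral_const_mul, integral_const_mul,
    expIoi hμ 0, expIoi hμν 0, xExpIoi hμν]
  simp only [mul_zero, neg_zero, Real.exp_zero]
  have h1 := hμ.ne'
  have h2 := hν.ne'
  have h3 := hμν.ne'
  have h4 := hA.ne'
  field_simp
  ring


/-- The limiting distribution function `Ψ` satisfies the fixed-point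
equation of the one-step recursion. -/
theorem limiting_psi_fixed_point (μ ν : ℝ) (hμ : 0 < μ) (hν : 0 < ν)
    (Ψ : ℝ → ℝ)
    (hΨ : ∀ t : ℝ, Ψ t = if t ≤ 0 then ν^2/(μ^2+ν^2) * Real.exp (μ*t)
      else 1 - μ^2/(μ^2+ν^2) * Real.exp (-ν*t)) :
    (∀ t : ℝ, t ≤ 0 → Ψ t =
      μ * ν * Real.exp (μ*t) *
        ∫ u in Set.Ioi (0:ℝ), ∫ v in Set.Ioi (0:ℝ), Ψ (u - v) * Real.exp (-μ*u - ν*v)) ∧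
    (∀ t : ℝ, 0 < t → Ψ t =
      μ * ν * Real.exp (-ν*t) *
        (∫ u in Set.Ioi (0:ℝ), ∫ v in Set.Ioi (0:ℝ), Ψ (u - v) * Real.exp (-μ*u - ν*v))
        + 1 - Real.exp (-ν*t)) := by
  have hA : (0:ℝ) < μ^2+ν^2 := by positivity
  have key := key_integral μ ν hμ hν Ψ hΨ
  constructor
  · intro t ht
    rw [hΨ t, if_pos ht, key]
    field_simp
  · intro t ht
    rw [hΨ t, if_neg (not_le.mpr ht), key]
    field_simp
    ring
end

section
/- Let μ, ν > 0. Let W, α, β be mutually independent random variables with α exponentially distributed with rate μ and β exponentially distributed with rate ν, and let Ψ(t) = P(W < t). Then for all real t and all u, v ≥ 0: P(max(0, W + v) − max(u, W) < t) equals 1 − Ψ(−t) if u ≤ −t and v < t; equals 1 if u > −t and v < t; equals 0 if u ≤ −t and v ≥ t; and equals Ψ(u − v + t) if u > −t and v ≥ t. -/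
open MeasureTheory ProbabilityTheory

/-- The conditional-probability computation underlying the recursion:
for realized values `u, v ≥ 0` of the exponential entries,
`P(max(0, W + v) - max(u, W) < t)` is given by the stated four-case formula, where
`Ψ(t) = P(W < t)`. -/
theorem conditional_probability_four_cases {Ω : Type*} [MeasurableSpace Ω]
    (P : Measure Ω) [IsProbabilityMeasure P]
    (μ ν : ℝ) (hμ : 0 < μ) (hν : 0 < ν)
    (W α β : Ω → ℝ) (hmW : Measurable W) (hmα : Measurable α) (hmβ : Measurable β)
    (hindep : iIndepFun (m := fun _ : Fin 3 => Real.measurableSpace) ![W, α, β] P)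
    (hα : ∀ t : ℝ, (P {ω | α ω < t}).toReal = max 0 (1 - Real.exp (-μ*t)))
    (hβ : ∀ t : ℝ, (P {ω | β ω < t}).toReal = max 0 (1 - Real.exp (-ν*t)))
    (Ψ : ℝ → ℝ) (hΨ : ∀ t : ℝ, Ψ t = (P {ω | W ω < t}).toReal) :
    ∀ t u v : ℝ, 0 ≤ u → 0 ≤ v →
      (u ≤ -t → v < t →
        (P {ω | max 0 (W ω + v) - max u (W ω) < t}).toReal = 1 - Ψ (-t)) ∧
      (-t < u → v < t →
        (P {ω | max 0 (W ω + v) - max u (W ω) < t}).toReal = 1) ∧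
      (u ≤ -t → t ≤ v →
        (P {ω | max 0 (W ω + v) - max u (W ω) < t}).toReal = 0) ∧
      (-t < u → t ≤ v →
        (P {ω | max 0 (W ω + v) - max u (W ω) < t}).toReal = Ψ (u - v + t)) := by
  intro t u v hu hv
  refine ⟨?_, ?_, ?_, ?_⟩
  · intro h1 h2
    exact absurd h1 (by linarith [lt_of_le_of_lt hv h2])
  · intro h1 h2
    have hset : {ω | max 0 (W ω + v) - max u (W ω) < t} = Set.univ := by
      ext ω
      simp only [Set.mem_setOf_eq, Set.mem_univ, iff_true]
      have ht : 0 < t := lt_of_le_of_lt hv h2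
      rcases le_total (W ω + v) 0 with h | h <;>
      rcases le_total (W ω) u with h' | h' <;>
      simp [max_eq_left, max_eq_right, *] <;> linarith
    rw [hset, measure_univ, ENNReal.toReal_one]
  · intro h1 h2
    have hset : {ω | max 0 (W ω + v) - max u (W ω) < t} = ∅ := by
      ext ω
      simp only [Set.mem_setOf_eq, Set.mem_empty_iff_false, iff_false, not_lt]
      have ht : t ≤ 0 := by linarith
      rcases le_total (W ω + v) 0 with h | h <;>
      rcases le_total (W ω) u with h' | h' <;>
      simp [max_eq_left, max_eq_right, *] <;> linarith
    rw [hset, measure_empty, ENNReal.toReal_zero]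
  · intro h1 h2
    have hset : {ω | max 0 (W ω + v) - max u (W ω) < t} = {ω | W ω < u - v + t} := by
      ext ω
      simp only [Set.mem_setOf_eq]
      constructor
      · intro h
        rcases le_total (W ω) u with h' | h'
        · rw [max_eq_left h'] at h
          rcases le_total (W ω + v) 0 with hc | hc
          · rw [max_eq_left hc] at h; linarith
          · rw [max_eq_right hc] at h; linarith
        · rw [max_eq_right h'] at h
          have hc : 0 ≤ W ω + v := by linarith
          rw [max_eq_right hc] at h; linarith
      · intro h
        have hwu : W ω < u := by linarith
        rw [max_eq_left hwu.le]
        rcases le_total (W ω + v) 0 with hc | hc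
        · rw [max_eq_left hc]; linarith
        · rw [max_eq_right hc]; linarith
    rw [hset, hΨ]
end
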